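/- arXiv:math/0610304 — 2 statements merged into one kernel-verified Lean document; each statement's English description precedes it below -/
import Mathlib

section
/- Let G = (V,E) be a connected locally finite graph, let A and B be disjoint subsets of V with A ∪ B reachable (a simple random walk from any vertex outside A ∪ B hits A ∪ B in finitely many steps a.s.), and let x ∈ V \ (A ∪ B) be connected to A by a path avoiding B. Then there is a unique nonnegative bounded function h on V such that h ≡ 0 on A ∪ B, the discrete Laplacian Δ_G h(v) = Σ_{w∼v}(h(w) − h(v)) vanishes at every v ∈ V \ (A ∪ B ∪ {x}), and Σ_{v∈A} Δ_G h(v) = 1. -/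
open MeasureTheory

/-- The discrete Laplacian `Δ_G f (v) = Σ_{w ∼ v} (f w − f v)` on a locally finite graph. -/
def discLap {V : Type*} (G : SimpleGraph V) [∀ v : V, Fintype (G.neighborSet v)]
    (f : V → ℝ) (v : V) : ℝ :=
  ∑ w ∈ G.neighborFinset v, (f w - f v)

open scoped Classical in
/-- `X` is a simple random walk on `G` started from `x`, under the probability
measure `μ`: the probability of following any given finite path equals the product
of the reciprocals of the degrees along the path (and is `0` for non-paths). -/
def IsSRW {V : Type*} (G : SimpleGraph V) [∀ v : V, Fintype (G.neighborSet v)]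
    {Ω : Type*} [MeasurableSpace Ω] (μ : Measure Ω) (X : ℕ → Ω → V) (x : V) : Prop :=
  ∀ (k : ℕ) (p : ℕ → V), p 0 = x →
    μ {ω | ∀ i ≤ k, X i ω = p i} =
      if ∀ i < k, G.Adj (p i) (p (i + 1))
      then ∏ i ∈ Finset.range k, ((G.degree (p i) : ENNReal))⁻¹
      else 0

/-- A set `S` of vertices is reachable: simple random walk started from any vertex
outside `S` hits `S` in finitely many steps almost surely. -/
def ReachableSet {V : Type*} (G : SimpleGraph V) [∀ v : V, Fintype (G.neighborSet v)]
    (S : Set V) : Prop :=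
  ∀ x ∉ S, ∀ {Ω : Type} [MeasurableSpace Ω] (μ : Measure Ω) (X : ℕ → Ω → V),
    IsProbabilityMeasure μ → IsSRW G μ X x → μ {ω | ∃ n : ℕ, X n ω ∈ S} = 1

namespace SRWDev

open scoped ENNReal Classical

variable {V : Type*} (G : SimpleGraph V) [∀ v : V, Fintype (G.neighborSet v)]

/-- enumeration of neighbors -/
noncomputable def nbr (v : V) (j : ℕ) : V :=
  if h : j < (G.neighborFinset v).card then ((G.neighborFinset v).equivFin.symm ⟨j, h⟩ : V) else v

lemma degree_eq_card (v : V) : G.degree v = (G.neighborFinset v).card := rfl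

lemma nbr_adj {v : V} {j : ℕ} (h : j < G.degree v) : G.Adj v (nbr G v j) := by
  have h' : j < (G.neighborFinset v).card := h
  have := Finset.coe_mem ((G.neighborFinset v).equivFin.symm ⟨j, h'⟩)
  rw [SimpleGraph.mem_neighborFinset] at this
  unfold nbr
  rw [dif_pos h']
  exact this

lemma sum_nbr {M : Type*} [AddCommMonoid M] (v : V) (f : V → M) :
    ∑ w ∈ G.neighborFinset v, f w = ∑ j ∈ Finset.range (G.degree v), f (nbr G v j) := by
  classical
  calc ∑ w ∈ G.neighborFinset v, f w
      = ∑ x ∈ (G.neighborFinset v).attach, f ↑x := ((G.neighborFinset v).sum_attach _).symm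
    _ = ∑ j : Fin (G.neighborFinset v).card, f ↑((G.neighborFinset v).equivFin.symm j) :=
        (Equiv.sum_comp (G.neighborFinset v).equivFin.symm _).symm
    _ = ∑ j ∈ Finset.range (G.degree v), f (nbr G v j) := by
        rw [← Fin.sum_univ_eq_sum_range]
        apply Finset.sum_congr rfl
        intro j _
        congr 1
        unfold nbr
        rw [dif_pos j.isLt]


/-- one step of the walk, driven by a real number in `[0,1)` -/
noncomputable def step (pr : V × ℝ) : V × ℝ :=
  (nbr G pr.1 (⌊pr.2 * (G.degree pr.1 : ℝ)⌋.toNat),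
   Int.fract (pr.2 * (G.degree pr.1 : ℝ)))

/-- the trajectory of the walk -/
noncomputable def traj (v : V) (n : ℕ) (t : ℝ) : V := ((step G)^[n] (v, t)).1

lemma traj_zero (v : V) (t : ℝ) : traj G v 0 t = v := rfl

lemma traj_succ (v : V) (n : ℕ) (t : ℝ) :
    traj G v (n + 1) t = traj G (step G (v, t)).1 n (step G (v, t)).2 := by
  unfold traj
  rw [Function.iterate_succ_apply]

/-- weight functional -/
noncomputable def wgt (A : ℕ → Set V) : ℕ → V → ℝ≥0∞
  | 0, v => if v ∈ A 0 then 1 else 0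
  | (n+1), v => if v ∈ A 0 then
      (∑ j ∈ Finset.range (G.degree v), wgt (fun i => A (i+1)) n (nbr G v j)) / (G.degree v : ℝ≥0∞)
      else 0

/-- the event that the trajectory obeys the constraints `A` for `n` steps -/
def Ev (A : ℕ → Set V) (v : V) (n : ℕ) : Set ℝ :=
  {t | t ∈ Set.Ico (0:ℝ) 1 ∧ ∀ i ≤ n, traj G v i t ∈ A i}

lemma Ev_subset (A : ℕ → Set V) (v : V) (n : ℕ) : Ev G A v n ⊆ Set.Ico (0:ℝ) 1 :=
  fun _ ht => ht.1

lemma Ev_zero (A : ℕ → Set V) (v : V) :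
    Ev G A v 0 = if v ∈ A 0 then Set.Ico (0:ℝ) 1 else ∅ := by
  ext t
  by_cases hv : v ∈ A 0 <;>
    simp [Ev, hv, Nat.le_zero, traj_zero]

lemma Ev_succ_decomp (A : ℕ → Set V) (v : V) (hd : 0 < G.degree v) (hv : v ∈ A 0) (n : ℕ) :
    Ev G A v (n+1) =
      ⋃ j ∈ Finset.range (G.degree v),
        (fun t => t * (G.degree v : ℝ) - (j : ℝ)) ⁻¹' (Ev G (fun i => A (i+1)) (nbr G v j) n) := by
  have hd' : (0:ℝ) < (G.degree v : ℝ) := by exact_mod_cast hd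
  ext t
  simp only [Set.mem_iUnion, Finset.mem_range, Set.mem_preimage]
  constructor
  · rintro ⟨ht, hall⟩
    have h0 : 0 ≤ t * (G.degree v : ℝ) := mul_nonneg ht.1 hd'.le
    have h1 : t * (G.degree v : ℝ) < (G.degree v : ℝ) := by nlinarith [ht.2, ht.1]
    have hfl0 : 0 ≤ ⌊t * (G.degree v : ℝ)⌋ := Int.floor_nonneg.2 h0
    set j : ℕ := (⌊t * (G.degree v : ℝ)⌋).toNat with hjdef
    have hjz : (j : ℤ) = ⌊t * (G.degree v : ℝ)⌋ := Int.toNat_of_nonneg hfl0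
    have hjlt : j < G.degree v := by
      have : ⌊t * (G.degree v : ℝ)⌋ < (G.degree v : ℤ) := Int.floor_lt.2 (by exact_mod_cast h1)
      omega
    have hjr : ((j:ℤ):ℝ) = (j:ℝ) := by push_cast; ring
    have hstep1 : (step G (v, t)).1 = nbr G v j := rfl
    have hstep2 : (step G (v, t)).2 = t * (G.degree v : ℝ) - (j : ℝ) := by
      show Int.fract (t * (G.degree v : ℝ)) = _
      rw [← Int.self_sub_floor, ← hjz, hjr]
    have hjle : (j : ℝ) ≤ t * (G.degree v : ℝ) := by
      have := Int.floor_le (t * (G.degree v : ℝ)); rw [← hjz] at this; exact_mod_cast this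
    have hjgt : t * (G.degree v : ℝ) < (j : ℝ) + 1 := by
      have := Int.lt_floor_add_one (t * (G.degree v : ℝ)); rw [← hjz] at this; exact_mod_cast this
    refine ⟨j, hjlt, ⟨⟨by linarith, by linarith⟩, ?_⟩⟩
    intro i hi
    have := hall (i+1) (by omega)
    rw [traj_succ, hstep1, hstep2] at this
    exact this
  · rintro ⟨j, hjlt, hmem⟩
    obtain ⟨hs, hall⟩ := hmem
    have hjd : (j:ℝ) + 1 ≤ (G.degree v : ℝ) := by exact_mod_cast hjlt
    have hj0 : (0:ℝ) ≤ (j:ℝ) := by positivity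
    have htlo : 0 ≤ t := by nlinarith [hs.1]
    have hthi : t < 1 := by nlinarith [hs.2]
    have hfl : ⌊t * (G.degree v : ℝ)⌋ = (j : ℤ) := by
      apply Int.floor_eq_iff.2
      constructor
      · push_cast; linarith [hs.1]
      · push_cast; linarith [hs.2]
    have hstep1 : (step G (v, t)).1 = nbr G v j := by
      show nbr G v ((⌊t * (G.degree v : ℝ)⌋).toNat) = _
      rw [hfl]; simp
    have hstep2 : (step G (v, t)).2 = t * (G.degree v : ℝ) - (j : ℝ) := by
      show Int.fract (t * (G.degree v : ℝ)) = _
      rw [← Int.self_sub_floor, hfl]; push_cast; ring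
    refine ⟨⟨htlo, hthi⟩, ?_⟩
    intro i hi
    cases i with
    | zero => simpa [traj_zero] using hv
    | succ m =>
      rw [traj_succ, hstep1, hstep2]
      exact hall m (by omega)


lemma Ev_empty {A : ℕ → Set V} {v : V} (hv : v ∉ A 0) (n : ℕ) : Ev G A v n = ∅ := by
  ext t
  simp only [Ev, Set.mem_setOf_eq, Set.mem_empty_iff_false, iff_false, not_and]
  intro _ hall
  exact hv (by simpa [traj_zero] using hall 0 (Nat.zero_le n))

lemma vol_affine_preimage (d : ℕ) (hd : 0 < d) (j : ℕ) (E : Set ℝ) :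
    volume ((fun t : ℝ => t * (d:ℝ) - (j:ℝ)) ⁻¹' E) = volume E / (d : ℝ≥0∞) := by
  have hd0 : (d:ℝ) ≠ 0 := by positivity
  have hre : (fun t : ℝ => t * (d:ℝ) - (j:ℝ)) ⁻¹' E
      = (· * (d:ℝ)) ⁻¹' ((· + (-(j:ℝ))) ⁻¹' E) := by
    ext t; simp [sub_eq_add_neg]
  rw [hre, Real.volume_preimage_mul_right hd0, measure_preimage_add_right]
  have h1 : |(d:ℝ)⁻¹| = (d:ℝ)⁻¹ := abs_of_pos (by positivity)
  rw [h1, ENNReal.ofReal_inv_of_pos (by positivity), ENNReal.ofReal_natCast,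
    ENNReal.div_eq_inv_mul]

lemma Ev_measurable (hdeg : ∀ v : V, 0 < G.degree v) :
    ∀ (n : ℕ) (A : ℕ → Set V) (v : V), MeasurableSet (Ev G A v n) := by
  intro n
  induction n with
  | zero =>
    intro A v
    rw [Ev_zero]
    split <;> simp [measurableSet_Ico]
  | succ n ih =>
    intro A v
    by_cases hv : v ∈ A 0
    · rw [Ev_succ_decomp G A v (hdeg v) hv n]
      apply Finset.measurableSet_biUnion
      intro j _
      exact ((measurable_id.mul_const _).sub_const _) (ih _ _)
    · rw [Ev_empty G hv]
      exact MeasurableSet.empty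

lemma vol_Ev (hdeg : ∀ v : V, 0 < G.degree v) :
    ∀ (n : ℕ) (A : ℕ → Set V) (v : V), volume (Ev G A v n) = wgt G A n v := by
  intro n
  induction n with
  | zero =>
    intro A v
    rw [Ev_zero, wgt]
    split <;> simp [Real.volume_Ico]
  | succ n ih =>
    intro A v
    by_cases hv : v ∈ A 0
    · rw [Ev_succ_decomp G A v (hdeg v) hv n, wgt, if_pos hv]
      rw [measure_biUnion_finset ?disj ?meas]
      · rw [ENNReal.div_eq_inv_mul, Finset.mul_sum]
        apply Finset.sum_congr rfl
        intro j _
        rw [vol_affine_preimage _ (hdeg v) j _, ih, ENNReal.div_eq_inv_mul]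
      case disj =>
        intro j hj j' hj' hne
        simp only [Function.onFun]
        apply Set.disjoint_left.2
        intro t htj htj'
        apply hne
        have e1 := (Ev_subset G _ _ _ htj : t * (G.degree v:ℝ) - (j:ℝ) ∈ Set.Ico (0:ℝ) 1)
        have e2 := (Ev_subset G _ _ _ htj' : t * (G.degree v:ℝ) - (j':ℝ) ∈ Set.Ico (0:ℝ) 1)
        obtain ⟨a1,a2⟩ := e1; obtain ⟨b1,b2⟩ := e2
        by_contra hne2
        rcases Nat.lt_or_ge j j' with h | h
        · have : (j:ℝ) + 1 ≤ (j':ℝ) := by exact_mod_cast h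
          linarith
        · have hlt : j' < j := by omega
          have : (j':ℝ) + 1 ≤ (j:ℝ) := by exact_mod_cast hlt
          linarith
      case meas =>
        intro j _
        exact ((measurable_id.mul_const _).sub_const _) (Ev_measurable G hdeg n _ _)
    · rw [Ev_empty G hv, wgt, if_neg hv]
      simp


lemma forall_lt_succ_iff {Q : ℕ → Prop} {k : ℕ} :
    (∀ i < k+1, Q i) ↔ Q 0 ∧ ∀ i < k, Q (i+1) := by
  constructor
  · intro h
    exact ⟨h 0 (by omega), fun i hi => h (i+1) (by omega)⟩
  · rintro ⟨h0, h⟩ i hi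
    cases i with
    | zero => exact h0
    | succ m => exact h m (by omega)

lemma wgt_singleton : ∀ (k : ℕ) (p : ℕ → V) (v : V),
    wgt G (fun i => {p i}) k v =
      if v = p 0 ∧ (∀ i < k, G.Adj (p i) (p (i+1)))
      then ∏ i ∈ Finset.range k, ((G.degree (p i) : ℝ≥0∞))⁻¹ else 0 := by
  intro k
  induction k with
  | zero =>
    intro p v
    rw [wgt]
    simp
  | succ k ih =>
    intro p v
    rw [wgt]
    have hsum : (∑ j ∈ Finset.range (G.degree v), wgt G (fun i => {p (i+1)}) k (nbr G v j))
        = ∑ w ∈ G.neighborFinset v, wgt G (fun i => {p (i+1)}) k w :=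
      (sum_nbr G v _).symm
    show (if v ∈ ({p 0} : Set V) then
        (∑ j ∈ Finset.range (G.degree v), wgt G (fun i => {p (i+1)}) k (nbr G v j)) / (G.degree v : ℝ≥0∞)
        else 0) = _
    rw [hsum]
    by_cases hv : v = p 0
    case neg =>
      rw [if_neg (by simpa using hv), if_neg (by tauto)]
    case pos =>
      rw [if_pos (by simpa using hv)]
      by_cases hc : ∀ i < k, G.Adj (p (i+1)) (p (i+2))
      case neg =>
        have hz : ∀ w ∈ G.neighborFinset v, wgt G (fun i => {p (i+1)}) k w = 0 := by
          intro w _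
          rw [ih (fun i => p (i+1)) w, if_neg (by tauto)]
        rw [Finset.sum_eq_zero hz, if_neg]
        · simp
        · rintro ⟨-, hall⟩
          exact hc (fun i hi => hall (i+1) (by omega))
      case pos =>
        have hre : ∀ w ∈ G.neighborFinset v, wgt G (fun i => {p (i+1)}) k w
            = if w = p 1 then ∏ i ∈ Finset.range k, ((G.degree (p (i+1)) : ℝ≥0∞))⁻¹ else 0 := by
          intro w _
          rw [ih (fun i => p (i+1)) w]
          by_cases hw : w = p 1
          · rw [if_pos ⟨hw, hc⟩, if_pos hw]
          · rw [if_neg (by tauto), if_neg hw]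
        rw [Finset.sum_congr rfl hre, Finset.sum_ite_eq' (G.neighborFinset v) (p 1)]
        simp only [SimpleGraph.mem_neighborFinset]
        by_cases hadj : G.Adj v (p 1)
        · rw [if_pos hadj, if_pos ⟨hv, forall_lt_succ_iff.2 ⟨hv ▸ hadj, hc⟩⟩]
          rw [Finset.prod_range_succ']
          rw [ENNReal.div_eq_inv_mul, hv]
          ring
        · rw [if_neg hadj, if_neg]
          · simp
          · rintro ⟨-, hall⟩
            exact hadj (hv ▸ hall 0 (by omega))


/-- survival probability: probability of avoiding `S` for `n` steps -/
noncomputable def q (S : Set V) : ℕ → V → ℝ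
  | 0, v => if v ∈ S then 0 else 1
  | (n+1), v => if v ∈ S then 0 else
      (∑ j ∈ Finset.range (G.degree v), q S n (nbr G v j)) / (G.degree v : ℝ)

lemma q_succ_nbh (S : Set V) (n : ℕ) (v : V) :
    q G S (n+1) v = if v ∈ S then 0 else
      (∑ w ∈ G.neighborFinset v, q G S n w) / (G.degree v : ℝ) := by
  rw [q, sum_nbr G v (q G S n)]

lemma q_nonneg (S : Set V) : ∀ (n : ℕ) (v : V), 0 ≤ q G S n v := by
  intro n
  induction n with
  | zero => intro v; rw [q]; split <;> norm_num
  | succ n ih =>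
    intro v
    rw [q]
    split
    · exact le_refl 0
    · apply div_nonneg (Finset.sum_nonneg fun j _ => ih _) (by positivity)

lemma q_le_one (hdeg : ∀ v : V, 0 < G.degree v) (S : Set V) :
    ∀ (n : ℕ) (v : V), q G S n v ≤ 1 := by
  intro n
  induction n with
  | zero => intro v; rw [q]; split <;> norm_num
  | succ n ih =>
    intro v
    rw [q]
    split
    · norm_num
    · have hd : (0:ℝ) < (G.degree v : ℝ) := by exact_mod_cast hdeg v
      rw [div_le_one hd]
      calc ∑ j ∈ Finset.range (G.degree v), q G S n (nbr G v j)
          ≤ ∑ _j ∈ Finset.range (G.degree v), (1:ℝ) :=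
            Finset.sum_le_sum (fun j _ => ih _)
        _ = (G.degree v : ℝ) := by simp

lemma wgt_compl (hdeg : ∀ v : V, 0 < G.degree v) (S : Set V) :
    ∀ (n : ℕ) (v : V), wgt G (fun _ => Sᶜ) n v = ENNReal.ofReal (q G S n v) := by
  intro n
  induction n with
  | zero =>
    intro v
    rw [wgt, q]
    by_cases hv : v ∈ S <;> simp [hv]
  | succ n ih =>
    intro v
    rw [wgt, q]
    by_cases hv : v ∈ S
    · simp [hv]
    · rw [if_pos (by simpa using hv), if_neg hv]
      have hd : (0:ℝ) < (G.degree v : ℝ) := by exact_mod_cast hdeg v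
      rw [ENNReal.ofReal_div_of_pos hd]
      rw [ENNReal.ofReal_sum_of_nonneg (fun j _ => q_nonneg G S n _)]
      rw [ENNReal.ofReal_natCast]
      congr 1
      apply Finset.sum_congr rfl
      intro j _
      exact ih _


/-- The key probabilistic fact: if `S` is a reachable set, the survival
probabilities tend to zero. -/
lemma q_tendsto (hdeg : ∀ v : V, 0 < G.degree v) {S : Set V}
    (hreach : ReachableSet G S)
    {v : V} (hv : v ∉ S) :
    Filter.Tendsto (fun n => q G S n v) Filter.atTop (nhds 0) := by
  set μ : Measure ℝ := volume.restrict (Set.Ico (0:ℝ) 1) with hμ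
  have hprob : IsProbabilityMeasure μ := by
    constructor
    rw [hμ, Measure.restrict_apply_univ]
    simp [Real.volume_Ico]
  set X : ℕ → ℝ → V := fun n t => traj G v n t with hX
  have hsrw : IsSRW G μ X v := by
    intro k p hp0
    have hset : {ω : ℝ | ∀ i ≤ k, X i ω = p i} ∩ Set.Ico 0 1
        = Ev G (fun i => {p i}) v k := by
      ext t
      simp only [Set.mem_inter_iff, Set.mem_setOf_eq, Ev, Set.mem_singleton_iff]
      tauto
    rw [hμ, Measure.restrict_apply' measurableSet_Ico, hset, vol_Ev G hdeg,
      wgt_singleton]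
    by_cases hadj : ∀ i < k, G.Adj (p i) (p (i+1))
    · rw [if_pos ⟨hp0.symm, hadj⟩, if_pos hadj]
    · rw [if_neg (fun hcon => hadj hcon.2), if_neg hadj]
  have happ := hreach v hv μ X hprob hsrw
  set C : ℕ → Set ℝ := fun n => Ev G (fun _ => Sᶜ) v n with hC
  have hCmeas : ∀ n, MeasurableSet (C n) := fun n => Ev_measurable G hdeg n _ _
  have hCanti : Antitone C := by
    intro m n hmn t ht
    exact ⟨ht.1, fun i hi => ht.2 i (le_trans hi hmn)⟩
  have hCsub : ∀ n, C n ⊆ Set.Ico (0:ℝ) 1 := fun n => Ev_subset G _ _ _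
  have hiz : volume (⋂ n, C n) = 0 := by
    have hD : MeasurableSet (⋂ n, C n) := MeasurableSet.iInter hCmeas
    have hsub : {ω : ℝ | ∃ n, X n ω ∈ S} ∩ Set.Ico 0 1 ⊆ Set.Ico 0 1 \ ⋂ n, C n := by
      rintro t ⟨⟨n, hn⟩, ht⟩
      refine ⟨ht, ?_⟩
      intro hmem
      have := (Set.mem_iInter.1 hmem n).2 n (le_refl n)
      exact this hn
    have h1 : (1:ℝ≥0∞) ≤ volume (Set.Ico (0:ℝ) 1 \ ⋂ n, C n) := by
      calc (1:ℝ≥0∞) = μ {ω : ℝ | ∃ n, X n ω ∈ S} := happ.symm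
        _ = volume ({ω : ℝ | ∃ n, X n ω ∈ S} ∩ Set.Ico 0 1) := by
            rw [hμ, Measure.restrict_apply' measurableSet_Ico]
        _ ≤ volume (Set.Ico (0:ℝ) 1 \ ⋂ n, C n) := measure_mono hsub
    have hadd : volume (⋂ n, C n) + volume (Set.Ico (0:ℝ) 1 \ ⋂ n, C n)
        = volume ((⋂ n, C n) ∪ Set.Ico (0:ℝ) 1) := measure_add_diff hD.nullMeasurableSet _
    have hun : (⋂ n, C n) ∪ Set.Ico (0:ℝ) 1 = Set.Ico (0:ℝ) 1 :=
      Set.union_eq_self_of_subset_left (le_trans (Set.iInter_subset C 0) (hCsub 0))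
    rw [hun, Real.volume_Ico] at hadd
    have hico : volume ((⋂ n, C n) : Set ℝ) + 1 ≤ volume (⋂ n, C n) + volume (Set.Ico (0:ℝ) 1 \ ⋂ n, C n) :=
      add_le_add le_rfl h1
    rw [hadd] at hico
    simp only [sub_zero, ENNReal.ofReal_one] at hico
    have := ENNReal.le_of_add_le_add_right (by norm_num : (1:ℝ≥0∞) ≠ ∞)
      (le_trans hico (by norm_num : (1:ℝ≥0∞) ≤ 0 + 1))
    exact le_antisymm this zero_le
  have htends : Filter.Tendsto (fun n => volume (C n)) Filter.atTop (nhds 0) := by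
    have := tendsto_measure_iInter_atTop (μ := volume)
      (fun n => (hCmeas n).nullMeasurableSet) hCanti
      ⟨0, by
        apply ne_top_of_le_ne_top (by norm_num : (1:ℝ≥0∞) ≠ ∞)
        calc volume (C 0) ≤ volume (Set.Ico (0:ℝ) 1) := measure_mono (hCsub 0)
          _ = 1 := by simp [Real.volume_Ico]⟩
    rw [hiz] at this
    exact this
  have hval : ∀ n, volume (C n) = ENNReal.ofReal (q G S n v) := by
    intro n
    rw [hC]
    rw [vol_Ev G hdeg, wgt_compl G hdeg]
  rw [funext hval] at htends
  have h2 : Filter.Tendsto (fun n => (ENNReal.ofReal (q G S n v)).toReal)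
      Filter.atTop (nhds 0) := by
    have h0 := (ENNReal.tendsto_toReal (by norm_num : (0:ℝ≥0∞) ≠ ∞)).comp htends
    exact h0
  exact h2.congr (fun n => ENNReal.toReal_ofReal (q_nonneg G S n v))


/-- the `n`-step transition kernel of the walk killed on `S` -/
noncomputable def P (S : Set V) : ℕ → V → V → ℝ
  | 0, v, w => if v = w ∧ v ∉ S then 1 else 0
  | (m+1), v, w => if v ∉ S then
      (∑ u ∈ G.neighborFinset v, P S m u w) / (G.degree v : ℝ) else 0

lemma P_nonneg (S : Set V) : ∀ (m : ℕ) (v w : V), 0 ≤ P G S m v w := by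
  intro m
  induction m with
  | zero => intro v w; rw [P]; split <;> norm_num
  | succ m ih =>
    intro v w
    rw [P]
    split
    · exact div_nonneg (Finset.sum_nonneg fun u _ => ih u w) (by positivity)
    · exact le_refl 0

lemma P_succ_right (hdeg : ∀ v : V, 0 < G.degree v) (S : Set V) :
    ∀ (m : ℕ) (v w : V), P G S (m+1) v w =
      if w ∉ S then ∑ u ∈ G.neighborFinset w, P G S m v u / (G.degree u : ℝ) else 0 := by
  intro m
  induction m with
  | zero =>
    intro v w
    rw [P]
    by_cases hv : v ∉ S <;> by_cases hw : w ∉ S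
    · rw [if_pos hv, if_pos hw]
      by_cases hadj : G.Adj v w
      · have hl : ∑ u ∈ G.neighborFinset v, P G S 0 u w = 1 := by
          rw [Finset.sum_eq_single w]
          · rw [P, if_pos ⟨rfl, hw⟩]
          · intro u hu hne
            rw [P, if_neg (by tauto)]
          · intro hno
            exact absurd ((G.mem_neighborFinset v w).2 hadj) hno
        have hr : ∑ u ∈ G.neighborFinset w, P G S 0 v u / (G.degree u : ℝ)
            = 1 / (G.degree v : ℝ) := by
          rw [Finset.sum_eq_single v]
          · rw [P, if_pos ⟨rfl, hv⟩]
          · intro u hu hne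
            rw [P, if_neg (by tauto), zero_div]
          · intro hno
            exact absurd ((G.mem_neighborFinset w v).2 hadj.symm) hno
        rw [hl, hr]
      · have hl : ∑ u ∈ G.neighborFinset v, P G S 0 u w = 0 := by
          apply Finset.sum_eq_zero
          intro u hu
          rw [P, if_neg]
          rintro ⟨rfl, -⟩
          exact hadj ((G.mem_neighborFinset v u).1 hu)
        have hr : ∑ u ∈ G.neighborFinset w, P G S 0 v u / (G.degree u : ℝ) = 0 := by
          apply Finset.sum_eq_zero
          intro u hu
          rw [P, if_neg, zero_div]
          rintro ⟨rfl, -⟩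
          exact hadj (((G.mem_neighborFinset w v).1 hu).symm)
        rw [hl, hr, zero_div]
    · rw [if_pos hv, if_neg hw]
      have hl : ∑ u ∈ G.neighborFinset v, P G S 0 u w = 0 := by
        apply Finset.sum_eq_zero
        intro u hu
        rw [P, if_neg]
        rintro ⟨rfl, hns⟩
        exact hw hns
      rw [hl, zero_div]
    · rw [if_neg hv, if_pos hw]
      symm
      apply Finset.sum_eq_zero
      intro u hu
      rw [P, if_neg, zero_div]
      rintro ⟨rfl, hns⟩
      exact hv hns
    · rw [if_neg hv, if_neg hw]
  | succ m ih =>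
    intro v w
    show (if v ∉ S then (∑ u ∈ G.neighborFinset v, P G S (m+1) u w) / (G.degree v : ℝ) else 0) = _
    by_cases hw : w ∉ S
    case neg =>
      rw [if_neg hw]
      split
      · rw [Finset.sum_congr rfl (fun u _ => by rw [ih u w, if_neg hw]), Finset.sum_const,
          smul_zero, zero_div]
      · rfl
    case pos =>
      rw [if_pos hw]
      by_cases hv : v ∉ S
      case neg =>
        rw [if_neg hv]
        symm
        apply Finset.sum_eq_zero
        intro u hu
        rw [P, if_neg hv, zero_div]
      case pos =>
        rw [if_pos hv]
        have hstep : ∀ u ∈ G.neighborFinset v, P G S (m+1) u w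
            = ∑ u' ∈ G.neighborFinset w, P G S m u u' / (G.degree u' : ℝ) := by
          intro u _
          rw [ih u w, if_pos hw]
        rw [Finset.sum_congr rfl hstep, Finset.sum_comm]
        rw [Finset.sum_div]
        apply Finset.sum_congr rfl
        intro u' _
        rw [P, if_pos hv, div_div, ← Finset.sum_div, div_div,
          mul_comm ((G.degree u' : ℝ)) _]

lemma P_symm (hdeg : ∀ v : V, 0 < G.degree v) (S : Set V) :
    ∀ (m : ℕ) (v w : V),
      (G.degree v : ℝ) * P G S m v w = (G.degree w : ℝ) * P G S m w v := by
  intro m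
  induction m with
  | zero =>
    intro v w
    rw [P, P]
    by_cases hvw : v = w
    · subst hvw; rfl
    · rw [if_neg (by tauto), if_neg (by tauto)]; ring
  | succ m ih =>
    intro v w
    have hdv : ((G.degree v : ℝ)) ≠ 0 := by
      have := hdeg v; positivity
    have hdw : ((G.degree w : ℝ)) ≠ 0 := by
      have := hdeg w; positivity
    rw [P_succ_right G hdeg S m w v]
    show (G.degree v : ℝ) * (if v ∉ S then (∑ u ∈ G.neighborFinset v, P G S m u w) / (G.degree v : ℝ) else 0)
      = (G.degree w : ℝ) * _
    by_cases hv : v ∉ S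
    · rw [if_pos hv, if_pos hv, mul_div_cancel₀ _ hdv, Finset.mul_sum]
      apply Finset.sum_congr rfl
      intro u hu
      have hdu : ((G.degree u : ℝ)) ≠ 0 := by
        have := hdeg u; positivity
      rw [mul_div_assoc', eq_div_iff hdu]
      linear_combination ih u w
    · rw [if_neg hv, if_neg hv, mul_zero, mul_zero]


lemma flow (hdeg : ∀ v : V, 0 < G.degree v) (S : Set V) (T : Finset V)
    (hT : ∀ a ∈ T, a ∈ S) :
    ∀ (m : ℕ) (v : V),
      (∑ a ∈ T, ∑ w ∈ G.neighborFinset a, P G S m v w / (G.degree w : ℝ)) + q G S (m+1) v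
        ≤ q G S m v := by
  intro m
  induction m with
  | zero =>
    intro v
    by_cases hv : v ∈ S
    · have h1 : ∀ a ∈ T, ∑ w ∈ G.neighborFinset a, P G S 0 v w / (G.degree w : ℝ) = 0 := by
        intro a _
        apply Finset.sum_eq_zero
        intro w _
        rw [P, if_neg (by tauto), zero_div]
      rw [Finset.sum_eq_zero h1, q_succ_nbh, if_pos hv, q, if_pos hv]
      norm_num
    · have hdv : (0:ℝ) < (G.degree v : ℝ) := by exact_mod_cast hdeg v
      have h1 : ∀ a ∈ T, ∑ w ∈ G.neighborFinset a, P G S 0 v w / (G.degree w : ℝ)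
          = if v ∈ G.neighborFinset a then 1 / (G.degree v : ℝ) else 0 := by
        intro a _
        by_cases hmem : v ∈ G.neighborFinset a
        · rw [if_pos hmem, Finset.sum_eq_single v]
          · rw [P, if_pos ⟨rfl, hv⟩]
          · intro w _ hne
            rw [P, if_neg (by tauto), zero_div]
          · intro hno
            exact absurd hmem hno
        · rw [if_neg hmem]
          apply Finset.sum_eq_zero
          intro w hw
          rw [P, if_neg, zero_div]
          rintro ⟨rfl, -⟩
          exact hmem hw
      rw [Finset.sum_congr rfl h1]
      have h2 : (∑ a ∈ T, if v ∈ G.neighborFinset a then 1 / (G.degree v : ℝ) else 0)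
          = ∑ w ∈ G.neighborFinset v, (if w ∈ T then 1 / (G.degree v : ℝ) else 0) := by
        have hc : ∀ a ∈ T, (if v ∈ G.neighborFinset a then 1 / (G.degree v : ℝ) else 0)
            = if a ∈ G.neighborFinset v then 1 / (G.degree v : ℝ) else 0 := by
          intro a _
          simp only [SimpleGraph.mem_neighborFinset]
          rw [G.adj_comm]
        rw [Finset.sum_congr rfl hc, Finset.sum_ite_mem, Finset.sum_ite_mem,
          Finset.inter_comm]
      rw [h2, q_succ_nbh, if_neg hv, q, if_neg hv]
      have h3 : ∀ w ∈ G.neighborFinset v, (if w ∈ T then 1 / (G.degree v : ℝ) else 0)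
          = (if w ∈ T then (1:ℝ) else 0) / (G.degree v : ℝ) := by
        intro w _
        split <;> simp
      rw [Finset.sum_congr rfl h3, ← Finset.sum_div, ← add_div, div_le_one hdv]
      calc (∑ w ∈ G.neighborFinset v, if w ∈ T then (1:ℝ) else 0)
            + ∑ w ∈ G.neighborFinset v, q G S 0 w
          = ∑ w ∈ G.neighborFinset v, ((if w ∈ T then (1:ℝ) else 0) + q G S 0 w) := by
            rw [Finset.sum_add_distrib]
        _ ≤ ∑ _w ∈ G.neighborFinset v, (1:ℝ) := by
            apply Finset.sum_le_sum
            intro w _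
            by_cases hw : w ∈ T
            · rw [if_pos hw, q, if_pos (hT w hw)]
              norm_num
            · rw [if_neg hw, q]
              split <;> norm_num
        _ = (G.degree v : ℝ) := by simp
  | succ m ih =>
    intro v
    by_cases hv : v ∈ S
    · have h1 : ∀ a ∈ T, ∑ w ∈ G.neighborFinset a, P G S (m+1) v w / (G.degree w : ℝ) = 0 := by
        intro a _
        apply Finset.sum_eq_zero
        intro w _
        rw [P, if_neg (by tauto), zero_div]
      rw [Finset.sum_eq_zero h1, q_succ_nbh, if_pos hv, q, if_pos hv]
      norm_num
    · have hdv : (0:ℝ) < (G.degree v : ℝ) := by exact_mod_cast hdeg v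
      have hPv : ∀ w, P G S (m+1) v w
          = (∑ u ∈ G.neighborFinset v, P G S m u w) / (G.degree v : ℝ) := by
        intro w
        rw [P, if_pos hv]
      have hexp : (∑ a ∈ T, ∑ w ∈ G.neighborFinset a, P G S (m+1) v w / (G.degree w : ℝ))
          = (∑ u ∈ G.neighborFinset v,
              (∑ a ∈ T, ∑ w ∈ G.neighborFinset a, P G S m u w / (G.degree w : ℝ)))
            / (G.degree v : ℝ) := by
        calc ∑ a ∈ T, ∑ w ∈ G.neighborFinset a, P G S (m+1) v w / (G.degree w : ℝ)
            = ∑ a ∈ T, ∑ w ∈ G.neighborFinset a,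
                (∑ u ∈ G.neighborFinset v, P G S m u w / (G.degree w : ℝ)) / (G.degree v : ℝ) := by
              refine Finset.sum_congr rfl fun a _ => Finset.sum_congr rfl fun w _ => ?_
              rw [hPv w, div_right_comm, Finset.sum_div]
          _ = (∑ a ∈ T, ∑ w ∈ G.neighborFinset a,
                ∑ u ∈ G.neighborFinset v, P G S m u w / (G.degree w : ℝ)) / (G.degree v : ℝ) := by
              simp only [← Finset.sum_div]
          _ = _ := by
              congr 1
              rw [Finset.sum_comm]
              apply Finset.sum_congr rfl
              intro u _
              rw [Finset.sum_comm]
      rw [hexp, q_succ_nbh, if_neg hv, q_succ_nbh, if_neg hv, ← add_div,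
        div_le_div_iff_of_pos_right hdv, ← Finset.sum_add_distrib]
      exact Finset.sum_le_sum fun u _ => ih u




lemma q_mono_set {S S' : Set V} (hss : S ⊆ S') :
    ∀ (n : ℕ) (v : V), q G S' n v ≤ q G S n v := by
  intro n
  induction n with
  | zero =>
    intro v
    rw [q, q]
    by_cases hv : v ∈ S
    · rw [if_pos hv, if_pos (hss hv)]
    · rw [if_neg hv]
      split <;> norm_num
  | succ n ih =>
    intro v
    rw [q, q]
    by_cases hv : v ∈ S
    · rw [if_pos hv, if_pos (hss hv)]
    · rw [if_neg hv]
      split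
      · exact div_nonneg (Finset.sum_nonneg fun j _ => q_nonneg G S n _) (by positivity)
      · gcongr with j hj
        exact ih _

/-- probability of reaching `x` within `n` steps while avoiding `S` -/
noncomputable def F (S : Set V) (x : V) : ℕ → V → ℝ
  | 0, v => if v = x then 1 else 0
  | (n+1), v => if v = x then 1 else if v ∈ S then 0 else
      (∑ w ∈ G.neighborFinset v, F S x n w) / (G.degree v : ℝ)

lemma F_nonneg (S : Set V) (x : V) : ∀ (n : ℕ) (v : V), 0 ≤ F G S x n v := by
  intro n
  induction n with
  | zero => intro v; rw [F]; split <;> norm_num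
  | succ n ih =>
    intro v
    rw [F]
    split
    · norm_num
    · split
      · exact le_rfl
      · exact div_nonneg (Finset.sum_nonneg fun w _ => ih w) (by positivity)

lemma F_le_one (hdeg : ∀ v : V, 0 < G.degree v) (S : Set V) (x : V) :
    ∀ (n : ℕ) (v : V), F G S x n v ≤ 1 := by
  intro n
  induction n with
  | zero => intro v; rw [F]; split <;> norm_num
  | succ n ih =>
    intro v
    rw [F]
    split
    · exact le_rfl
    · split
      · norm_num
      · have hdv : (0:ℝ) < (G.degree v : ℝ) := by exact_mod_cast hdeg v
        rw [div_le_one hdv]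
        calc ∑ w ∈ G.neighborFinset v, F G S x n w
            ≤ ∑ _w ∈ G.neighborFinset v, (1:ℝ) := Finset.sum_le_sum fun w _ => ih w
          _ = (G.degree v : ℝ) := by simp

lemma F_mono (S : Set V) (x : V) : ∀ (n : ℕ) (v : V), F G S x n v ≤ F G S x (n+1) v := by
  intro n
  induction n with
  | zero =>
    intro v
    show (if v = x then (1:ℝ) else 0) ≤ _
    rw [F]
    by_cases hv : v = x
    · rw [if_pos hv, if_pos hv]
    · rw [if_neg hv, if_neg hv]
      split
      · norm_num
      · exact div_nonneg (Finset.sum_nonneg fun w _ => F_nonneg G S x 0 w) (by positivity)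
  | succ n ih =>
    intro v
    rw [F]
    show _ ≤ (if v = x then (1:ℝ) else if v ∈ S then 0 else
      (∑ w ∈ G.neighborFinset v, F G S x (n+1) w) / (G.degree v : ℝ))
    by_cases hv : v = x
    · rw [if_pos hv, if_pos hv]
    · rw [if_neg hv, if_neg hv]
      by_cases hs : v ∈ S
      · rw [if_pos hs, if_pos hs]
      · rw [if_neg hs, if_neg hs]
        gcongr with w hw
        exact ih w


/-- the harmonic function: probability of reaching `x` before `S` -/
noncomputable def Finf (S : Set V) (x : V) (v : V) : ℝ := ⨆ n, F G S x n v

lemma F_bddAbove (hdeg : ∀ v : V, 0 < G.degree v) (S : Set V) (x v : V) :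
    BddAbove (Set.range fun n => F G S x n v) := by
  refine ⟨1, ?_⟩
  rintro y ⟨n, rfl⟩
  exact F_le_one G hdeg S x n v

lemma F_tendsto (hdeg : ∀ v : V, 0 < G.degree v) (S : Set V) (x v : V) :
    Filter.Tendsto (fun n => F G S x n v) Filter.atTop (nhds (Finf G S x v)) :=
  tendsto_atTop_ciSup (monotone_nat_of_le_succ fun n => F_mono G S x n v)
    (F_bddAbove G hdeg S x v)

lemma Finf_nonneg (hdeg : ∀ v : V, 0 < G.degree v) (S : Set V) (x v : V) :
    0 ≤ Finf G S x v :=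
  le_trans (F_nonneg G S x 0 v) (le_ciSup (F_bddAbove G hdeg S x v) 0)

lemma Finf_le_one (hdeg : ∀ v : V, 0 < G.degree v) (S : Set V) (x v : V) :
    Finf G S x v ≤ 1 :=
  ciSup_le fun n => F_le_one G hdeg S x n v

lemma F_at_x (S : Set V) (x : V) : ∀ n, F G S x n x = 1 := by
  intro n
  cases n with
  | zero => rw [F, if_pos rfl]
  | succ n => rw [F, if_pos rfl]

lemma Finf_at_x (S : Set V) (x : V) : Finf G S x x = 1 := by
  unfold Finf
  rw [funext (F_at_x G S x)]
  exact ciSup_const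

lemma F_on_S (S : Set V) {x : V} (hxS : x ∉ S) {v : V} (hv : v ∈ S) :
    ∀ n, F G S x n v = 0 := by
  have hvx : v ≠ x := fun h => hxS (h ▸ hv)
  intro n
  cases n with
  | zero => rw [F, if_neg hvx]
  | succ n => rw [F, if_neg hvx, if_pos hv]

lemma Finf_on_S (S : Set V) {x : V} (hxS : x ∉ S) {v : V} (hv : v ∈ S) :
    Finf G S x v = 0 := by
  unfold Finf
  rw [funext (F_on_S G S hxS hv)]
  exact ciSup_const

lemma Finf_harmonic (hdeg : ∀ v : V, 0 < G.degree v) (S : Set V) (x : V)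
    {v : V} (hvS : v ∉ S) (hvx : v ≠ x) :
    Finf G S x v = (∑ w ∈ G.neighborFinset v, Finf G S x w) / (G.degree v : ℝ) := by
  have h1 : Filter.Tendsto (fun n => F G S x (n+1) v) Filter.atTop (nhds (Finf G S x v)) :=
    (Filter.tendsto_add_atTop_iff_nat 1).2 (F_tendsto G hdeg S x v)
  have h2 : Filter.Tendsto (fun n => F G S x (n+1) v) Filter.atTop
      (nhds ((∑ w ∈ G.neighborFinset v, Finf G S x w) / (G.degree v : ℝ))) := by
    have heq : ∀ n, F G S x (n+1) v
        = (∑ w ∈ G.neighborFinset v, F G S x n w) / (G.degree v : ℝ) := by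
      intro n
      rw [F, if_neg hvx, if_neg hvS]
    rw [funext heq]
    exact (tendsto_finset_sum _ fun w _ => F_tendsto G hdeg S x w).div_const _
  exact tendsto_nhds_unique h1 h2

lemma F_le_P_sum (hdeg : ∀ v : V, 0 < G.degree v) (S : Set V) (x : V) (hxS : x ∉ S) :
    ∀ (n : ℕ) (v : V), F G S x n v ≤ ∑ m ∈ Finset.range (n+1), P G S m v x := by
  intro n
  induction n with
  | zero =>
    intro v
    rw [F, Finset.sum_range_one, P]
    by_cases hv : v = x
    · rw [if_pos hv, if_pos ⟨hv, hv ▸ hxS⟩]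
    · rw [if_neg hv, if_neg (by tauto)]
  | succ n ih =>
    intro v
    rw [F]
    by_cases hvx : v = x
    · rw [if_pos hvx]
      have h0 : P G S 0 v x = 1 := by rw [P, if_pos ⟨hvx, hvx ▸ hxS⟩]
      calc (1:ℝ) = P G S 0 v x := h0.symm
        _ ≤ ∑ m ∈ Finset.range (n+2), P G S m v x :=
            Finset.single_le_sum (fun m _ => P_nonneg G S m v x) (by simp)
    · rw [if_neg hvx]
      by_cases hvS : v ∈ S
      · rw [if_pos hvS]
        exact Finset.sum_nonneg fun m _ => P_nonneg G S m v x
      · rw [if_neg hvS]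
        have hdv : (0:ℝ) < (G.degree v : ℝ) := by exact_mod_cast hdeg v
        calc (∑ w ∈ G.neighborFinset v, F G S x n w) / (G.degree v : ℝ)
            ≤ (∑ w ∈ G.neighborFinset v, ∑ m ∈ Finset.range (n+1), P G S m w x)
              / (G.degree v : ℝ) := by
              gcongr with w hw
              exact ih w
          _ = ∑ m ∈ Finset.range (n+1), (∑ w ∈ G.neighborFinset v, P G S m w x)
              / (G.degree v : ℝ) := by
              rw [Finset.sum_comm, Finset.sum_div]
          _ = ∑ m ∈ Finset.range (n+1), P G S (m+1) v x := by
              refine Finset.sum_congr rfl fun m _ => ?_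
              rw [P, if_pos hvS]
          _ ≤ ∑ m ∈ Finset.range (n+2), P G S m v x := by
              rw [Finset.sum_range_succ' (fun m => P G S m v x) (n+1)]
              have := P_nonneg G S 0 v x
              linarith
  

lemma sum_F_le (hdeg : ∀ v : V, 0 < G.degree v) (S : Set V) (x : V) (hxS : x ∉ S)
    (T : Finset V) (hT : ∀ a ∈ T, a ∈ S) (n : ℕ) :
    ∑ a ∈ T, ∑ w ∈ G.neighborFinset a, F G S x n w ≤ (G.degree x : ℝ) := by
  have hq0 : q G S 0 x = 1 := by rw [q, if_neg hxS]
  calc ∑ a ∈ T, ∑ w ∈ G.neighborFinset a, F G S x n w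
      ≤ ∑ a ∈ T, ∑ w ∈ G.neighborFinset a, ∑ m ∈ Finset.range (n+1), P G S m w x := by
        apply Finset.sum_le_sum
        intro a _
        exact Finset.sum_le_sum fun w _ => F_le_P_sum G hdeg S x hxS n w
    _ = ∑ m ∈ Finset.range (n+1), ∑ a ∈ T, ∑ w ∈ G.neighborFinset a, P G S m w x := by
        rw [Finset.sum_comm]
        apply Finset.sum_congr rfl
        intro a _
        rw [Finset.sum_comm]
    _ = ∑ m ∈ Finset.range (n+1), (G.degree x : ℝ)
          * ∑ a ∈ T, ∑ w ∈ G.neighborFinset a, P G S m x w / (G.degree w : ℝ) := by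
        refine Finset.sum_congr rfl fun m _ => ?_
        rw [Finset.mul_sum]
        refine Finset.sum_congr rfl fun a _ => ?_
        rw [Finset.mul_sum]
        refine Finset.sum_congr rfl fun w _ => ?_
        have hdw : ((G.degree w : ℝ)) ≠ 0 := by
          have := hdeg w; positivity
        rw [mul_div_assoc', eq_div_iff hdw]
        linear_combination -P_symm G hdeg S m x w
    _ ≤ ∑ m ∈ Finset.range (n+1), (G.degree x : ℝ) * (q G S m x - q G S (m+1) x) := by
        apply Finset.sum_le_sum
        intro m _
        have hfl := flow G hdeg S T hT m x
        have hdx : (0:ℝ) ≤ (G.degree x : ℝ) := by positivity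
        apply mul_le_mul_of_nonneg_left _ hdx
        linarith
    _ = (G.degree x : ℝ) * ∑ m ∈ Finset.range (n+1), (q G S m x - q G S (m+1) x) := by
        rw [Finset.mul_sum]
    _ = (G.degree x : ℝ) * (q G S 0 x - q G S (n+1) x) := by
        rw [Finset.sum_range_sub' (fun m => q G S m x)]
    _ ≤ (G.degree x : ℝ) * 1 := by
        have := q_nonneg G S (n+1) x
        have hdx : (0:ℝ) ≤ (G.degree x : ℝ) := by positivity
        apply mul_le_mul_of_nonneg_left _ hdx
        rw [hq0]
        linarith
    _ = (G.degree x : ℝ) := mul_one _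

lemma abs_le_q (hdeg : ∀ v : V, 0 < G.degree v) (S' : Set V) (u : V → ℝ) (M : ℝ) (hM : 0 ≤ M)
    (hu0 : ∀ v ∈ S', u v = 0) (hub : ∀ v, |u v| ≤ M)
    (hharm : ∀ v, v ∉ S' → u v = (∑ w ∈ G.neighborFinset v, u w) / (G.degree v : ℝ)) :
    ∀ (n : ℕ) (v : V), |u v| ≤ M * q G S' n v := by
  intro n
  induction n with
  | zero =>
    intro v
    rw [q]
    by_cases hv : v ∈ S'
    · rw [if_pos hv, hu0 v hv]
      simp
    · rw [if_neg hv, mul_one]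
      exact hub v
  | succ n ih =>
    intro v
    rw [q_succ_nbh]
    by_cases hv : v ∈ S'
    · rw [if_pos hv, hu0 v hv]
      simp
    · rw [if_neg hv, hharm v hv]
      have hdv : (0:ℝ) < (G.degree v : ℝ) := by exact_mod_cast hdeg v
      rw [abs_div, abs_of_pos hdv, ← mul_div_assoc]
      gcongr
      calc |∑ w ∈ G.neighborFinset v, u w|
          ≤ ∑ w ∈ G.neighborFinset v, |u w| := Finset.abs_sum_le_sum_abs _ _
        _ ≤ ∑ w ∈ G.neighborFinset v, M * q G S' n w := Finset.sum_le_sum fun w _ => ih w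
        _ = M * ∑ w ∈ G.neighborFinset v, q G S' n w := by rw [Finset.mul_sum]
  

lemma discLap_eq (f : V → ℝ) (v : V) :
    discLap G f v = (∑ w ∈ G.neighborFinset v, f w) - (G.degree v : ℝ) * f v := by
  unfold discLap
  rw [Finset.sum_sub_distrib, Finset.sum_const, nsmul_eq_mul]
  rfl

lemma discLap_const_mul (c : ℝ) (f : V → ℝ) (v : V) :
    discLap G (fun w => c * f w) v = c * discLap G f v := by
  unfold discLap
  rw [Finset.mul_sum]
  apply Finset.sum_congr rfl
  intro w _
  ring

lemma discLap_div (f : V → ℝ) (c : ℝ) (v : V) :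
    discLap G (fun w => f w / c) v = discLap G f v / c := by
  unfold discLap
  rw [Finset.sum_div]
  apply Finset.sum_congr rfl
  intro w _
  rw [div_sub_div_same]

lemma Finf_harmonic' (hdeg : ∀ v : V, 0 < G.degree v) (S : Set V) (x : V)
    {v : V} (hvS : v ∉ S) (hvx : v ≠ x) :
    discLap G (Finf G S x) v = 0 := by
  rw [discLap_eq]
  have hdv : ((G.degree v : ℝ)) ≠ 0 := by
    have := hdeg v; positivity
  rw [Finf_harmonic G hdeg S x hvS hvx, mul_div_cancel₀ _ hdv]
  ring

lemma pos_aux (hdeg : ∀ v : V, 0 < G.degree v) {A B : Set V} {x : V} :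
    ∀ {v c : V} (W : G.Walk v c), c ∈ A → (∀ w ∈ W.support, w ∉ B) → v ∉ A ∪ B →
      0 < Finf G (A ∪ B) x v →
      ∃ a ∈ A, ∃ w ∈ G.neighborFinset a, 0 < Finf G (A ∪ B) x w := by
  intro v c W
  induction W with
  | nil =>
    intro hc _ hvS _
    exact absurd (Or.inl hc) hvS
  | @cons v v1 c hadj W ih =>
    intro hc hsupp hvS hpos
    by_cases hv1A : v1 ∈ A
    · exact ⟨v1, hv1A, v, (G.mem_neighborFinset v1 v).2 hadj.symm, hpos⟩
    · have hv1B : v1 ∉ B := by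
        apply hsupp
        rw [SimpleGraph.Walk.support_cons]
        exact List.mem_cons_of_mem _ W.start_mem_support
      have hv1S : v1 ∉ A ∪ B := by
        rintro (h | h)
        exacts [hv1A h, hv1B h]
      have hpos1 : 0 < Finf G (A ∪ B) x v1 := by
        by_cases hv1x : v1 = x
        · rw [hv1x, Finf_at_x]
          norm_num
        · rw [Finf_harmonic G hdeg (A ∪ B) x hv1S hv1x]
          have hdv : (0:ℝ) < (G.degree v1 : ℝ) := by exact_mod_cast hdeg v1
          apply div_pos _ hdv
          have hvmem : v ∈ G.neighborFinset v1 := (G.mem_neighborFinset v1 v).2 hadj.symm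
          calc (0:ℝ) < Finf G (A ∪ B) x v := hpos
            _ ≤ ∑ w ∈ G.neighborFinset v1, Finf G (A ∪ B) x w :=
                Finset.single_le_sum (fun w _ => Finf_nonneg G hdeg (A ∪ B) x w) hvmem
      apply ih hc _ hv1S hpos1
      intro w hw
      apply hsupp
      rw [SimpleGraph.Walk.support_cons]
      exact List.mem_cons_of_mem _ hw

end SRWDev

open SRWDev

/-- **Existence and uniqueness of the normalized discrete harmonic function `h`**
(Lemma 2.1, first part): if `A`, `B` are disjoint, `A ∪ B` is reachable, and
`x ∉ A ∪ B` is joined to `A` by a path avoiding `B`, then there is a unique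
nonnegative bounded `h : V → ℝ` vanishing on `A ∪ B`, discrete harmonic off
`A ∪ B ∪ {x}`, with `Σ_{v ∈ A} Δ_G h (v) = 1`. -/
theorem exists_unique_normalized_harmonic {V : Type*} (G : SimpleGraph V)
    [∀ v : V, Fintype (G.neighborSet v)] (hconn : G.Connected)
    (A B : Set V) (hdisj : Disjoint A B) (hreach : ReachableSet G (A ∪ B))
    (x : V) (hx : x ∉ A ∪ B)
    (hpath : ∃ (a : V) (p : G.Walk x a), a ∈ A ∧ ∀ v ∈ p.support, v ∉ B) :
    ∃! h : V → ℝ,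
      (∀ v, 0 ≤ h v) ∧ (∃ M : ℝ, ∀ v, h v ≤ M) ∧
      (∀ v ∈ A ∪ B, h v = 0) ∧
      (∀ v, v ∉ A ∪ B ∪ {x} → discLap G h v = 0) ∧
      (∑' a : A, discLap G h a = 1) := by
  classical
  obtain ⟨a0, W, ha0, hWB⟩ := hpath
  set S : Set V := A ∪ B with hS
  have hxa : x ≠ a0 := fun h => hx (Or.inl (h ▸ ha0))
  have : Nontrivial V := ⟨⟨x, a0, hxa⟩⟩
  have hdeg : ∀ v : V, 0 < G.degree v := by
    intro v
    rw [SimpleGraph.degree_pos_iff_exists_adj]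
    obtain ⟨w, hw⟩ := exists_ne v
    obtain ⟨p⟩ := hconn.preconnected v w
    cases p with
    | nil => exact absurd rfl hw.symm
    | cons h p => exact ⟨_, h⟩
  set FF : V → ℝ := Finf G S x with hFF
  have hFFS : ∀ v ∈ S, FF v = 0 := fun v hv => Finf_on_S G S hx hv
  have hg_eq : ∀ a : V, a ∈ A → discLap G FF a = ∑ w ∈ G.neighborFinset a, FF w := by
    intro a ha
    rw [discLap_eq, hFFS a (Or.inl ha), mul_zero, sub_zero]
  have hgnn : ∀ a : V, a ∈ A → 0 ≤ discLap G FF a := by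
    intro a ha
    rw [hg_eq a ha]
    exact Finset.sum_nonneg fun w _ => Finf_nonneg G hdeg S x w
  have hsummable : Summable (fun a : A => discLap G FF ↑a) := by
    have hnn : (0 : ↥A → ℝ) ≤ (fun a : ↥A => discLap G FF ↑a) := fun a => hgnn ↑a a.2
    apply summable_of_sum_le hnn
    intro u
    set T : Finset V := u.map ⟨Subtype.val, Subtype.val_injective⟩ with hT
    have hTS : ∀ b ∈ T, b ∈ S := by
      intro b hb
      rw [hT, Finset.mem_map] at hb
      obtain ⟨a, _, rfl⟩ := hb
      exact Or.inl a.2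
    have hstep : ∑ a ∈ u, discLap G FF ↑a
        = ∑ b ∈ T, ∑ w ∈ G.neighborFinset b, FF w := by
      rw [hT, Finset.sum_map]
      apply Finset.sum_congr rfl
      intro a _
      exact hg_eq ↑a a.2
    rw [hstep]
    have hlim : Filter.Tendsto
        (fun n => ∑ b ∈ T, ∑ w ∈ G.neighborFinset b, F G S x n w)
        Filter.atTop (nhds (∑ b ∈ T, ∑ w ∈ G.neighborFinset b, FF w)) :=
      tendsto_finset_sum _ fun b _ =>
        tendsto_finset_sum _ fun w _ => F_tendsto G hdeg S x w
    exact le_of_tendsto hlim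
      (Filter.Eventually.of_forall fun n => sum_F_le G hdeg S x hx T hTS n)
  set Z : ℝ := ∑' a : A, discLap G FF ↑a with hZ
  have hZpos : 0 < Z := by
    obtain ⟨a, haA, w, hw, hwpos⟩ :=
      pos_aux G hdeg (A := A) (B := B) (x := x) W ha0 hWB hx
        (by rw [Finf_at_x]; norm_num)
    apply Summable.tsum_pos hsummable (fun a => hgnn ↑a a.2) (⟨a, haA⟩ : A)
    show 0 < discLap G FF a
    rw [hg_eq a haA]
    exact lt_of_lt_of_le hwpos
      (Finset.single_le_sum (fun w _ => Finf_nonneg G hdeg S x w) hw)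
  have hZne : Z ≠ 0 := ne_of_gt hZpos
  refine ⟨fun v => FF v / Z, ⟨?_, ?_, ?_, ?_, ?_⟩, ?_⟩
  · intro v
    exact div_nonneg (Finf_nonneg G hdeg S x v) hZpos.le
  · refine ⟨1 / Z, fun v => ?_⟩
    exact (div_le_div_iff_of_pos_right hZpos).2 (Finf_le_one G hdeg S x v)
  · intro v hv
    show FF v / Z = 0
    rw [hFFS v hv, zero_div]
  · intro v hv
    have hv1 : v ∉ S := fun h => hv (Or.inl h)
    have hv2 : v ≠ x := fun h => hv (Or.inr (by rw [h]; rfl))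
    rw [discLap_div, Finf_harmonic' G hdeg S x hv1 hv2, zero_div]
  · calc ∑' a : A, discLap G (fun v => FF v / Z) ↑a
        = ∑' a : A, discLap G FF ↑a / Z := by
          apply tsum_congr
          intro a
          rw [discLap_div]
      _ = Z / Z := by rw [tsum_div_const, ← hZ]
      _ = 1 := div_self hZne
  · intro h' hprops
    obtain ⟨hn', ⟨M', hb'⟩, hz', hh', hs'⟩ := hprops
    set c : ℝ := h' x with hc
    set u : V → ℝ := fun v => h' v - c * FF v with hu
    have hM'0 : 0 ≤ M' := le_trans (hn' x) (hb' x)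
    set M'' : ℝ := M' + |c| with hM''
    have hM''0 : 0 ≤ M'' := by positivity
    have hub : ∀ v, |u v| ≤ M'' := by
      intro v
      calc |h' v - c * FF v| ≤ |h' v| + |c * FF v| := abs_sub _ _
        _ ≤ M' + |c| := by
            apply add_le_add
            · rw [abs_of_nonneg (hn' v)]
              exact hb' v
            · rw [abs_mul]
              calc |c| * |FF v| ≤ |c| * 1 := by
                    apply mul_le_mul_of_nonneg_left _ (abs_nonneg c)
                    rw [abs_of_nonneg (Finf_nonneg G hdeg S x v)]
                    exact Finf_le_one G hdeg S x v
                _ = |c| := mul_one _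
    have hu0 : ∀ v ∈ S ∪ {x}, u v = 0 := by
      rintro v (hv | hv)
      · show h' v - c * FF v = 0
        rw [hz' v hv, hFFS v hv, mul_zero, sub_zero]
      · have hvx : v = x := hv
        show h' v - c * FF v = 0
        rw [hvx, hFF, Finf_at_x, mul_one, hc, sub_self]
    have hharm : ∀ v, v ∉ S ∪ {x} → u v = (∑ w ∈ G.neighborFinset v, u w) / (G.degree v : ℝ) := by
      intro v hv
      have hv1 : v ∉ S := fun h => hv (Or.inl h)
      have hv2 : v ≠ x := fun h => hv (Or.inr (by rw [h]; rfl))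
      have hdv : ((G.degree v : ℝ)) ≠ 0 := by
        have := hdeg v; positivity
      have hL' := hh' v hv
      rw [discLap_eq] at hL'
      have e1 : h' v = (∑ w ∈ G.neighborFinset v, h' w) / (G.degree v : ℝ) := by
        field_simp
        linarith
      have e2 : FF v = (∑ w ∈ G.neighborFinset v, FF w) / (G.degree v : ℝ) :=
        Finf_harmonic G hdeg S x hv1 hv2
      show h' v - c * FF v = _
      have e3 : (∑ w ∈ G.neighborFinset v, u w)
          = (∑ w ∈ G.neighborFinset v, h' w) - c * ∑ w ∈ G.neighborFinset v, FF w := by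
        rw [Finset.mul_sum, ← Finset.sum_sub_distrib]
      rw [e1, e2, e3]
      ring
    have hchar : ∀ v, h' v = c * FF v := by
      intro v
      by_cases hvS : v ∈ S ∪ {x}
      · have := hu0 v hvS
        have h2 : h' v - c * FF v = 0 := this
        linarith
      · have hv1 : v ∉ S := fun h => hvS (Or.inl h)
        have hq' := abs_le_q G hdeg (S ∪ {x}) u M'' hM''0 hu0 hub hharm
        have hq0 : Filter.Tendsto (fun n => q G S n v) Filter.atTop (nhds 0) :=
          q_tendsto G hdeg hreach hv1
        have hq'0 : Filter.Tendsto (fun n => q G (S ∪ {x}) n v) Filter.atTop (nhds 0) :=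
          squeeze_zero (fun n => q_nonneg G (S ∪ {x}) n v)
            (fun n => q_mono_set G Set.subset_union_left n v) hq0
        have hlim : Filter.Tendsto (fun n => M'' * q G (S ∪ {x}) n v)
            Filter.atTop (nhds 0) := by
          have := hq'0.const_mul M''
          rwa [mul_zero] at this
        have habs : |u v| ≤ 0 :=
          ge_of_tendsto hlim (Filter.Eventually.of_forall fun n => hq' n v)
        have h2 : u v = 0 := abs_eq_zero.1 (le_antisymm habs (abs_nonneg _))
        have h3 : h' v - c * FF v = 0 := h2
        linarith
    have hcZ : c * Z = 1 := by
      have hfun : h' = fun v => c * FF v := funext hchar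
      rw [hfun] at hs'
      calc c * Z = ∑' a : A, c * discLap G FF ↑a := (tsum_mul_left).symm
        _ = ∑' a : A, discLap G (fun v => c * FF v) ↑a := by
            apply tsum_congr
            intro a
            rw [discLap_const_mul]
        _ = 1 := hs'
    funext v
    rw [hchar v]
    have hcv : c = 1 / Z := by
      rw [eq_div_iff hZne]
      exact hcZ
    rw [hcv]
    ring
end

section
/- If H is a nonempty hull in ℍ w.r.t. ∞, then the extension of φ_H^{-1} satisfies φ_H^{-1}(x) > x for every x ∈ (−∞, c_H) and φ_H^{-1}(x) < x for every x ∈ (d_H, +∞); equivalently φ_H(x) < x for x ∈ (−∞, a_H) and φ_H(x) > x for x ∈ (b_H, +∞). Consequently [a_H, b_H] ⊆ [c_H, d_H] for any hull H. -/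
open Complex Set Filter

noncomputable section

/-- The open upper half plane `ℍ`. -/
def UpperHalf : Set ℂ := {z : ℂ | 0 < z.im}

/-- The real segment `[a, b]` viewed as a subset of `ℂ`. -/
def realSeg (a b : ℝ) : Set ℂ := (fun x : ℝ => (x : ℂ)) '' Set.Icc a b

/-- A hull in `ℍ` w.r.t. `∞`: a bounded, relatively closed subset of `ℍ` with
simply connected complement in `ℍ`. -/
def IsHull (H : Set ℂ) : Prop :=
  H ⊆ UpperHalf ∧ Bornology.IsBounded H ∧
    (∃ C : Set ℂ, IsClosed C ∧ H = C ∩ UpperHalf) ∧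
    SimplyConnectedSpace ↥(UpperHalf \ H)

/-- `φ` maps `ℍ \ H` conformally onto `ℍ` with hydrodynamic normalization
`φ(z) = z + c/z + O(1/z²)` at `∞`; then `c = hcap H` is the half-plane capacity. -/
def IsHydroMapOn (H : Set ℂ) (φ : ℂ → ℂ) (c : ℝ) : Prop :=
  Set.BijOn φ (UpperHalf \ H) UpperHalf ∧
  DifferentiableOn ℂ φ (UpperHalf \ H) ∧
  Filter.Tendsto (fun z : ℂ => (φ z - z) * z)
    (Filter.comap (fun z : ℂ => ‖z‖) Filter.atTop ⊓ Filter.principal (UpperHalf \ H))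
    (nhds (c : ℂ))

/-- `ψ` is a conformal extension of `φ⁻¹` (the inverse of the normalized map of the
hull `H`) to `ℂ \ [c, d]`. -/
def ExtendsInvTo (H : Set ℂ) (φ ψ : ℂ → ℂ) (c d : ℝ) : Prop :=
  DifferentiableOn ℂ ψ (realSeg c d)ᶜ ∧
  ∀ z ∈ UpperHalf, ψ z ∈ UpperHalf \ H ∧ φ (ψ z) = z

/-- `[c, d]` is the minimal closed interval such that `φ⁻¹` extends conformally to
`ℂ \ [c, d]`. -/
def IsMinExtInterval (H : Set ℂ) (φ : ℂ → ℂ) (c d : ℝ) : Prop :=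
  c ≤ d ∧ (∃ ψ : ℂ → ℂ, ExtendsInvTo H φ ψ c d) ∧
  ∀ c' d' : ℝ, (∃ ψ : ℂ → ℂ, ExtendsInvTo H φ ψ c' d') → Set.Icc c d ⊆ Set.Icc c' d'

open Metric Topology

set_option maxHeartbeats 1000000



/-- For points in the upper half plane, `|η - B| < |η - conj B|`. -/
lemma hull_aux_normSq_lt {η B : ℂ} (hη : 0 < η.im) (hB : 0 < B.im) :
    Complex.normSq (η - B) < Complex.normSq (η - (starRingEnd ℂ) B) := by
  simp only [Complex.normSq_apply, Complex.sub_re, Complex.sub_im, Complex.conj_re,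
    Complex.conj_im]
  nlinarith

lemma hull_aux_sub_conj_ne {η B : ℂ} (hη : 0 < η.im) (hB : 0 < B.im) :
    η - (starRingEnd ℂ) B ≠ 0 := by
  intro h
  have h2 : (η - (starRingEnd ℂ) B).im = 0 := by rw [h]; simp
  simp only [Complex.sub_im, Complex.conj_im] at h2
  linarith

lemma hull_aux_abs_lt {η B : ℂ} (hη : 0 < η.im) (hB : 0 < B.im) :
    norm (η - B) < norm (η - (starRingEnd ℂ) B) := by
  rw [Complex.norm_def, Complex.norm_def]
  exact Real.sqrt_lt_sqrt (Complex.normSq_nonneg _) (hull_aux_normSq_lt hη hB)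

lemma hull_aux_ratio_lt_one {η B : ℂ} (hη : 0 < η.im) (hB : 0 < B.im) :
    norm ((η - B) / (η - (starRingEnd ℂ) B)) < 1 := by
  rw [norm_div, div_lt_one]
  · exact hull_aux_abs_lt hη hB
  · exact (norm_pos_iff).mpr (hull_aux_sub_conj_ne hη hB)
/-- The Möbius map `S ζ = (w₀ - conj w₀ * ζ)/(1 - ζ)` maps the unit ball into the
upper half plane when `Im w₀ > 0`. -/
lemma hull_aux_S_im {w₀ ζ : ℂ} (hw₀ : 0 < w₀.im) (hζ : norm ζ < 1) :
    0 < ((w₀ - (starRingEnd ℂ) w₀ * ζ) / (1 - ζ)).im := by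
  have h1 : (1 : ℂ) - ζ ≠ 0 := by
    intro h
    have : ζ = 1 := by linear_combination -h
    rw [this] at hζ; simp at hζ
  have hns : 0 < Complex.normSq (1 - ζ) := Complex.normSq_pos.mpr h1
  have hnζ : Complex.normSq ζ < 1 := by
    have := Complex.sq_norm ζ
    nlinarith [norm_nonneg ζ]
  rw [Complex.div_im]
  have hnum : (w₀ - (starRingEnd ℂ) w₀ * ζ).im * (1 - ζ).re -
      (w₀ - (starRingEnd ℂ) w₀ * ζ).re * (1 - ζ).im = w₀.im * (1 - Complex.normSq ζ) := by
    simp only [Complex.sub_im, Complex.sub_re, Complex.mul_im, Complex.mul_re,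
      Complex.conj_re, Complex.conj_im, Complex.one_re, Complex.one_im,
      Complex.normSq_apply]
    ring
  have : ((w₀ - (starRingEnd ℂ) w₀ * ζ).im * (1 - ζ).re / Complex.normSq (1 - ζ) -
      (w₀ - (starRingEnd ℂ) w₀ * ζ).re * (1 - ζ).im / Complex.normSq (1 - ζ))
      = w₀.im * (1 - Complex.normSq ζ) / Complex.normSq (1 - ζ) := by
    rw [div_sub_div_same, hnum]
  rw [this]
  have hpos : 0 < w₀.im * (1 - Complex.normSq ζ) := by nlinarith
  positivity

/-- Schwarz–Pick inequality for holomorphic self-maps of the upper half-plane. -/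
lemma hull_aux_schwarz_pick (F : ℂ → ℂ)
    (hd : ∀ w : ℂ, 0 < w.im → DifferentiableAt ℂ F w)
    (hm : ∀ w : ℂ, 0 < w.im → 0 < (F w).im)
    (w w₀ : ℂ) (hw : 0 < w.im) (hw₀ : 0 < w₀.im) :
    norm (F w - F w₀) * norm (w - (starRingEnd ℂ) w₀) ≤
      norm (F w - (starRingEnd ℂ) (F w₀)) * norm (w - w₀) := by
  set B := F w₀ with hB
  have hBim : 0 < B.im := hm w₀ hw₀
  set S : ℂ → ℂ := fun ζ => (w₀ - (starRingEnd ℂ) w₀ * ζ) / (1 - ζ) with hS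
  set G : ℂ → ℂ := fun ζ => (F (S ζ) - B) / (F (S ζ) - (starRingEnd ℂ) B) with hG
  have hSim : ∀ ζ : ℂ, norm ζ < 1 → 0 < (S ζ).im := fun ζ hζ => hull_aux_S_im hw₀ hζ
  have hone : ∀ ζ : ℂ, norm ζ < 1 → (1 : ℂ) - ζ ≠ 0 := by
    intro ζ hζ h
    have : ζ = 1 := by linear_combination -h
    rw [this] at hζ; simp at hζ
  have hGdiff : DifferentiableOn ℂ G (ball (0 : ℂ) 1) := by
    intro ζ hζ
    rw [mem_ball_zero_iff] at hζ
    have hζ' : norm ζ < 1 := hζ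
    have hSd : DifferentiableAt ℂ S ζ := by
      apply DifferentiableAt.div
      · exact (differentiableAt_const _).sub ((differentiableAt_const _).mul differentiableAt_id)
      · exact (differentiableAt_const _).sub differentiableAt_id
      · exact hone ζ hζ'
    have hFd : DifferentiableAt ℂ F (S ζ) := hd _ (hSim ζ hζ')
    have hden : F (S ζ) - (starRingEnd ℂ) B ≠ 0 :=
      hull_aux_sub_conj_ne (hm _ (hSim ζ hζ')) hBim
    exact (((hFd.comp ζ hSd).sub (differentiableAt_const _)).div
      ((hFd.comp ζ hSd).sub (differentiableAt_const _)) hden).differentiableWithinAt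
  have hGmaps : MapsTo G (ball (0 : ℂ) 1) (ball (0 : ℂ) 1) := by
    intro ζ hζ
    rw [mem_ball_zero_iff] at hζ ⊢
    have : norm ((F (S ζ) - B) / (F (S ζ) - (starRingEnd ℂ) B)) < 1 := by
      rw [norm_div, div_lt_one]
      · rw [Complex.norm_def, Complex.norm_def]
        refine Real.sqrt_lt_sqrt (Complex.normSq_nonneg _) ?_
        have h1 := hm _ (hSim ζ hζ)
        simp only [Complex.normSq_apply, Complex.sub_re, Complex.sub_im, Complex.conj_re,
          Complex.conj_im]
        nlinarith
      · exact (norm_pos_iff).mpr (hull_aux_sub_conj_ne (hm _ (hSim ζ hζ)) hBim)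
    exact this
  have hG0 : G 0 = 0 := by
    have hS0 : S 0 = w₀ := by simp [hS]
    simp [hG, hS0, hB]
  -- the point
  have hd0 : w - (starRingEnd ℂ) w₀ ≠ 0 := hull_aux_sub_conj_ne hw hw₀
  set ζw : ℂ := (w - w₀) / (w - (starRingEnd ℂ) w₀) with hζw
  have hζwlt : norm ζw < 1 := by
    rw [hζw, norm_div, div_lt_one ((norm_pos_iff).mpr hd0)]
    rw [Complex.norm_def, Complex.norm_def]
    refine Real.sqrt_lt_sqrt (Complex.normSq_nonneg _) ?_
    simp only [Complex.normSq_apply, Complex.sub_re, Complex.sub_im, Complex.conj_re,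
      Complex.conj_im]
    nlinarith
  have hwconj : w₀ - (starRingEnd ℂ) w₀ ≠ 0 := by
    intro h
    have h2 : (w₀ - (starRingEnd ℂ) w₀).im = 0 := by rw [h]; simp
    simp only [Complex.sub_im, Complex.conj_im] at h2
    linarith
  have h1ζw : (1 : ℂ) - ζw ≠ 0 := hone ζw hζwlt
  have hSζw : S ζw = w := by
    rw [hS]
    simp only []
    rw [div_eq_iff h1ζw, hζw]
    field_simp
    ring
  have := Complex.norm_le_norm_of_mapsTo_ball hGdiff (hGmaps.mono_right ball_subset_closedBall) hG0 hζwlt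
  rw [hG] at this
  simp only [hSζw] at this
  rw [hζw, norm_div, norm_div, div_le_div_iff₀
    ((norm_pos_iff).mpr (hull_aux_sub_conj_ne (hm w hw) hBim))
    ((norm_pos_iff).mpr hd0)] at this
  linarith [this]


lemma hull_aux_real_div_tendsto (a : ℕ → ℝ) (K : ℝ) (N : ℕ)
    (h : ∀ n : ℕ, N ≤ n → |a n - (n : ℝ)| ≤ K) :
    Tendsto (fun n : ℕ => a n / (n : ℝ)) atTop (𝓝 1) := by
  have hlo : Tendsto (fun n : ℕ => 1 - K / (n : ℝ)) atTop (𝓝 1) := by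
    have := tendsto_const_div_atTop_nhds_zero_nat K
    simpa using (tendsto_const_nhds (x := (1:ℝ))).sub this
  have hhi : Tendsto (fun n : ℕ => 1 + K / (n : ℝ)) atTop (𝓝 1) := by
    have := tendsto_const_div_atTop_nhds_zero_nat K
    simpa using (tendsto_const_nhds (x := (1:ℝ))).add this
  refine tendsto_of_tendsto_of_tendsto_of_le_of_le' hlo hhi ?_ ?_
  · filter_upwards [eventually_ge_atTop (max N 1)] with n hn
    have hnn : (0:ℝ) < (n : ℝ) := by
      have h1 := le_trans (le_max_right N 1) hn
      have : (1:ℝ) ≤ (n:ℝ) := by exact_mod_cast h1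
      linarith
    have hb := h n (le_trans (le_max_left N 1) hn)
    rw [abs_le] at hb
    rw [le_div_iff₀ hnn]
    have he : (1 - K/(n:ℝ)) * (n:ℝ) = (n:ℝ) - K := by field_simp
    rw [he]; linarith [hb.1]
  · filter_upwards [eventually_ge_atTop (max N 1)] with n hn
    have hnn : (0:ℝ) < (n : ℝ) := by
      have h1 := le_trans (le_max_right N 1) hn
      have : (1:ℝ) ≤ (n:ℝ) := by exact_mod_cast h1
      linarith
    have hb := h n (le_trans (le_max_left N 1) hn)
    rw [abs_le] at hb
    rw [div_le_iff₀ hnn]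
    have he : (1 + K/(n:ℝ)) * (n:ℝ) = (n:ℝ) + K := by field_simp
    rw [he]; linarith [hb.2]

lemma hull_aux_norm_div_tendsto' (g : ℕ → ℂ) (K : ℝ) (N : ℕ)
    (h : ∀ n : ℕ, N ≤ n → norm (g n - (n : ℂ) * Complex.I) ≤ K) :
    Tendsto (fun n : ℕ => norm (g n) / (n : ℝ)) atTop (𝓝 1) := by
  refine hull_aux_real_div_tendsto _ K N (fun n hn => ?_)
  have h1 : norm ((n : ℂ) * Complex.I) = (n : ℝ) := by
    rw [norm_mul, Complex.norm_I, mul_one, Complex.norm_natCast]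
  calc |norm (g n) - (n : ℝ)|
      = |‖g n‖ - ‖(n : ℂ) * Complex.I‖| := by
        rw [h1]
    _ ≤ ‖g n - (n : ℂ) * Complex.I‖ := abs_norm_sub_norm_le _ _
    _ ≤ K := h n hn
/-- Julia-type lemma: a holomorphic self-map of the upper half plane which stays
within bounded distance of the identity along the points `n·i` satisfies
`Im F w ≥ Im w` everywhere. -/
lemma hull_aux_julia (F : ℂ → ℂ)
    (hd : ∀ w : ℂ, 0 < w.im → DifferentiableAt ℂ F w)
    (hm : ∀ w : ℂ, 0 < w.im → 0 < (F w).im)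
    (M : ℝ) (N₀ : ℕ)
    (hM : ∀ n : ℕ, N₀ ≤ n → norm (F ((n:ℂ) * Complex.I) - (n:ℂ) * Complex.I) ≤ M)
    (w : ℂ) (hw : 0 < w.im) : w.im ≤ (F w).im := by
  have hM0 : 0 ≤ M := le_trans (norm_nonneg _) (hM N₀ le_rfl)
  set A := F w with hA
  set B : ℕ → ℂ := fun n => F ((n:ℂ) * Complex.I) with hBdef
  have hIim : ∀ n : ℕ, 1 ≤ n → 0 < ((n:ℂ) * Complex.I).im := by
    intro n hn
    rw [Complex.mul_I_im, Complex.natCast_re]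
    exact_mod_cast hn
  have hBim : ∀ n : ℕ, 1 ≤ n → 0 < (B n).im := fun n hn => hm _ (hIim n hn)
  have hAim : 0 < A.im := hm w hw
  -- Schwarz–Pick at centers n·i
  have hsp : ∀ n : ℕ, 1 ≤ n →
      norm (A - B n) * norm (w + (n:ℂ)*Complex.I) ≤
        norm (A - (starRingEnd ℂ) (B n)) * norm (w - (n:ℂ)*Complex.I) := by
    intro n hn
    have h := hull_aux_schwarz_pick F hd hm w ((n:ℂ)*Complex.I) hw (hIim n hn)
    have hc : (starRingEnd ℂ) ((n:ℂ)*Complex.I) = -((n:ℂ)*Complex.I) := by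
      simp [map_mul, Complex.conj_I]
    rw [hc, sub_neg_eq_add] at h
    exact h
  -- sequences
  set u1 : ℕ → ℝ := fun n => norm (w + (n:ℂ)*Complex.I) / n with hu1def
  set u2 : ℕ → ℝ := fun n => norm (w - (n:ℂ)*Complex.I) / n with hu2def
  set v1 : ℕ → ℝ := fun n => norm (A - (starRingEnd ℂ) (B n)) / n with hv1def
  set v2 : ℕ → ℝ := fun n => norm (A - B n) / n with hv2def
  set DA : ℕ → ℝ := fun n =>
    norm (A - (starRingEnd ℂ) (B n)) - norm (A - B n) with hDAdef
  set DW : ℕ → ℝ := fun n =>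
    norm (w + (n:ℂ)*Complex.I) - norm (w - (n:ℂ)*Complex.I) with hDWdef
  have hu1 : Tendsto u1 atTop (𝓝 1) := by
    refine hull_aux_norm_div_tendsto' _ (norm w) 0 (fun n _ => ?_)
    simp
  have hu2 : Tendsto u2 atTop (𝓝 1) := by
    have h := hull_aux_norm_div_tendsto' (fun n => (starRingEnd ℂ) w + (n:ℂ)*Complex.I)
      (norm w) 0 (fun n _ => by simp)
    refine h.congr (fun n => ?_)
    show norm ((starRingEnd ℂ) w + (n:ℂ)*Complex.I) / n = u2 n
    have hcc : (starRingEnd ℂ) (w - (n:ℂ)*Complex.I)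
        = (starRingEnd ℂ) w + (n:ℂ)*Complex.I := by
      rw [map_sub, map_mul, map_natCast, Complex.conj_I]; ring
    rw [← hcc, Complex.norm_conj]
  have hv1 : Tendsto v1 atTop (𝓝 1) := by
    refine hull_aux_norm_div_tendsto' _ (norm A + M) N₀ (fun n hn => ?_)
    have he : A - (starRingEnd ℂ) (B n) - (n:ℂ)*Complex.I
        = A - (starRingEnd ℂ) (B n - (n:ℂ)*Complex.I) := by
      rw [map_sub, map_mul, map_natCast, Complex.conj_I]; ring
    rw [he]
    calc norm (A - (starRingEnd ℂ) (B n - (n:ℂ)*Complex.I))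
        ≤ norm A + norm ((starRingEnd ℂ) (B n - (n:ℂ)*Complex.I)) := by
          exact (norm_sub_le _ _)
      _ ≤ norm A + M := by
          rw [Complex.norm_conj]; exact add_le_add le_rfl (hM n hn)
  have hv2 : Tendsto v2 atTop (𝓝 1) := by
    have h := hull_aux_norm_div_tendsto' (fun n => (starRingEnd ℂ) A - (starRingEnd ℂ) (B n))
      (norm A + M) N₀ (fun n hn => ?_)
    · refine h.congr (fun n => ?_)
      show norm ((starRingEnd ℂ) A - (starRingEnd ℂ) (B n)) / n = v2 n
      rw [← map_sub, Complex.norm_conj]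
    · have he : (starRingEnd ℂ) A - (starRingEnd ℂ) (B n) - (n:ℂ)*Complex.I
          = (starRingEnd ℂ) A - (starRingEnd ℂ) (B n - (n:ℂ)*Complex.I) := by
        simp [map_sub, map_mul, Complex.conj_I]
        ring
      rw [he]
      calc norm ((starRingEnd ℂ) A - (starRingEnd ℂ) (B n - (n:ℂ)*Complex.I))
          ≤ norm ((starRingEnd ℂ) A)
            + norm ((starRingEnd ℂ) (B n - (n:ℂ)*Complex.I)) := by
            exact (norm_sub_le _ _)
        _ ≤ norm A + M := by
            rw [Complex.norm_conj, Complex.norm_conj]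
            exact add_le_add le_rfl (hM n hn)
  have hbim : Tendsto (fun n : ℕ => (B n).im / (n:ℝ)) atTop (𝓝 1) := by
    refine hull_aux_real_div_tendsto _ M N₀ (fun n hn => ?_)
    have he : (B n).im - (n:ℝ) = (B n - (n:ℂ)*Complex.I).im := by
      simp [Complex.sub_im, Complex.mul_I_im]
    rw [he]
    exact le_trans (Complex.abs_im_le_norm _) (hM n hn)
  -- identities
  have hDAeq : ∀ n : ℕ, 1 ≤ n → DA n = 4 * A.im * ((B n).im/(n:ℝ)) / (v1 n + v2 n) := by
    intro n hn
    have hnpos : (0:ℝ) < n := by exact_mod_cast hn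
    have hC : 0 < norm (A - (starRingEnd ℂ) (B n)) :=
      norm_pos_iff.mpr (hull_aux_sub_conj_ne hAim (hBim n hn))
    have hY : 0 ≤ norm (A - B n) := norm_nonneg _
    have hsq : (norm (A - (starRingEnd ℂ) (B n)))^2 - (norm (A - B n))^2
        = 4 * A.im * (B n).im := by
      rw [Complex.sq_norm, Complex.sq_norm]
      simp only [Complex.normSq_apply, Complex.sub_re, Complex.sub_im, Complex.conj_re,
        Complex.conj_im]
      ring
    have hsum : 0 < norm (A - (starRingEnd ℂ) (B n)) + norm (A - B n) := by
      linarith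
    show norm (A - (starRingEnd ℂ) (B n)) - norm (A - B n)
        = 4 * A.im * ((B n).im/(n:ℝ)) / (norm (A - (starRingEnd ℂ) (B n)) / n
          + norm (A - B n) / n)
    rw [← add_div, eq_div_iff (ne_of_gt (div_pos hsum hnpos))]
    rw [← mul_div_assoc, ← mul_div_assoc]
    congr 1
    linear_combination hsq
  have hDWeq : ∀ n : ℕ, 1 ≤ n → DW n = 4 * w.im / (u1 n + u2 n) := by
    intro n hn
    have hnpos : (0:ℝ) < n := by exact_mod_cast hn
    have hP : 0 < norm (w + (n:ℂ)*Complex.I) := by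
      refine norm_pos_iff.mpr (fun h => ?_)
      have : (w + (n:ℂ)*Complex.I).im = 0 := by rw [h]; simp
      rw [Complex.add_im, Complex.mul_I_im, Complex.natCast_re] at this
      have : (0:ℝ) < w.im + n := by positivity
      linarith
    have hQ : 0 ≤ norm (w - (n:ℂ)*Complex.I) := norm_nonneg _
    have hsq : (norm (w + (n:ℂ)*Complex.I))^2 - (norm (w - (n:ℂ)*Complex.I))^2
        = 4 * (n:ℝ) * w.im := by
      rw [Complex.sq_norm, Complex.sq_norm]
      simp only [Complex.normSq_apply, Complex.add_re, Complex.add_im, Complex.sub_re,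
        Complex.sub_im, Complex.mul_I_im, Complex.mul_I_re, Complex.natCast_re,
        Complex.natCast_im]
      ring
    have hsum : 0 < norm (w + (n:ℂ)*Complex.I) + norm (w - (n:ℂ)*Complex.I) := by
      linarith
    show norm (w + (n:ℂ)*Complex.I) - norm (w - (n:ℂ)*Complex.I)
        = 4 * w.im / (norm (w + (n:ℂ)*Complex.I) / n
          + norm (w - (n:ℂ)*Complex.I) / n)
    rw [← add_div, eq_div_iff (ne_of_gt (div_pos hsum hnpos))]
    rw [← mul_div_assoc, div_eq_iff hnpos.ne']
    linear_combination hsq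
  have hDA : Tendsto DA atTop (𝓝 (2 * A.im)) := by
    have h1 : Tendsto (fun n : ℕ => 4 * A.im * ((B n).im/(n:ℝ)) / (v1 n + v2 n)) atTop
        (𝓝 (4 * A.im * 1 / (1 + 1))) :=
      (tendsto_const_nhds.mul hbim).div (hv1.add hv2) (by norm_num)
    have h2 : (4 * A.im * 1 / (1 + 1) : ℝ) = 2 * A.im := by ring
    rw [h2] at h1
    refine Tendsto.congr' ?_ h1
    filter_upwards [eventually_ge_atTop 1] with n hn
    exact (hDAeq n hn).symm
  have hDW : Tendsto DW atTop (𝓝 (2 * w.im)) := by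
    have h1 : Tendsto (fun n : ℕ => 4 * w.im / (u1 n + u2 n)) atTop
        (𝓝 (4 * w.im / (1 + 1))) :=
      tendsto_const_nhds.div (hu1.add hu2) (by norm_num)
    have h2 : (4 * w.im / (1 + 1) : ℝ) = 2 * w.im := by ring
    rw [h2] at h1
    refine Tendsto.congr' ?_ h1
    filter_upwards [eventually_ge_atTop 1] with n hn
    exact (hDWeq n hn).symm
  have hle : (fun n : ℕ => v1 n * DW n) ≤ᶠ[atTop] fun n : ℕ => DA n * u1 n := by
    filter_upwards [eventually_ge_atTop 1] with n hn
    have hnpos : (0:ℝ) < n := by exact_mod_cast hn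
    have h := hsp n hn
    have h2 : norm (A - (starRingEnd ℂ) (B n)) * DW n
        ≤ DA n * norm (w + (n:ℂ)*Complex.I) := by
      simp only [hDAdef, hDWdef]
      nlinarith [h]
    calc v1 n * DW n
        = (norm (A - (starRingEnd ℂ) (B n)) * DW n) / n := by
          simp only [hv1def]; ring
      _ ≤ (DA n * norm (w + (n:ℂ)*Complex.I)) / n := by
          gcongr
      _ = DA n * u1 n := by simp only [hu1def]; ring
  have hfinal := le_of_tendsto_of_tendsto (hv1.mul hDW) (hDA.mul hu1) hle
  have : 1 * (2 * w.im) ≤ 2 * A.im * 1 := hfinal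
  linarith



lemma hull_aux_mem_compl_realSeg {c d : ℝ} {z : ℂ} :
    z ∈ (realSeg c d)ᶜ ↔ (z.im ≠ 0 ∨ z.re < c ∨ d < z.re) := by
  constructor
  · intro hz
    by_contra hcon
    push_neg at hcon
    obtain ⟨him, hre1, hre2⟩ := hcon
    exact hz ⟨z.re, ⟨hre1, hre2⟩, by
      apply Complex.ext <;> simp [him]⟩
  · rintro h ⟨x, hx, rfl⟩
    rcases h with h | h | h
    · exact h (by simp)
    · simp only [Complex.ofReal_re] at h; exact absurd hx.1 (not_le.mpr h)
    · simp only [Complex.ofReal_re] at h; exact absurd hx.2 (not_le.mpr h)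

lemma hull_aux_preconnected (c d : ℝ) : IsPreconnected (realSeg c d)ᶜ := by
  set U1 : Set ℂ := {z | 0 < z.im} with hU1
  set U2 : Set ℂ := {z | z.im < 0} with hU2
  set U3 : Set ℂ := {z | z.re < c} with hU3
  set U4 : Set ℂ := {z | d < z.re} with hU4
  have hc1 : IsPreconnected U1 := (convex_halfSpace_im_gt (0:ℝ)).isPreconnected
  have hc2 : IsPreconnected U2 := (convex_halfSpace_im_lt (0:ℝ)).isPreconnected
  have hc3 : IsPreconnected U3 := (convex_halfSpace_re_lt c).isPreconnected
  have hc4 : IsPreconnected U4 := (convex_halfSpace_re_gt d).isPreconnected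
  have hA : IsPreconnected (U3 ∪ U1) := by
    apply IsPreconnected.union ((c - 1 : ℝ) + Complex.I) ?_ ?_ hc3 hc1
    · show ((c-1:ℝ) + Complex.I).re < c
      simp
    · show (0:ℝ) < ((c-1:ℝ) + Complex.I).im
      simp
  have hB : IsPreconnected (U3 ∪ U1 ∪ U2) := by
    apply IsPreconnected.union ((c - 1 : ℝ) - Complex.I) ?_ ?_ hA hc2
    · left
      show ((c-1:ℝ) - Complex.I).re < c
      simp
    · show ((c-1:ℝ) - Complex.I).im < 0
      simp
  have hC : IsPreconnected (U3 ∪ U1 ∪ U2 ∪ U4) := by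
    apply IsPreconnected.union ((d + 1 : ℝ) + Complex.I) ?_ ?_ hB hc4
    · left; right
      show (0:ℝ) < ((d+1:ℝ) + Complex.I).im
      simp
    · show d < ((d+1:ℝ) + Complex.I).re
      simp
  have heq : (realSeg c d)ᶜ = U3 ∪ U1 ∪ U2 ∪ U4 := by
    ext z
    rw [hull_aux_mem_compl_realSeg]
    simp only [Set.mem_union, hU1, hU2, hU3, hU4, Set.mem_setOf_eq]
    constructor
    · rintro (h | h | h)
      · rcases lt_or_gt_of_ne h with h' | h'
        · exact Or.inl (Or.inr h')
        · exact Or.inl (Or.inl (Or.inr h'))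
      · exact Or.inl (Or.inl (Or.inl h))
      · exact Or.inr h
    · rintro ((( h | h) | h) | h)
      · exact Or.inr (Or.inl h)
      · exact Or.inl (ne_of_gt h)
      · exact Or.inl (ne_of_lt h)
      · exact Or.inr (Or.inr h)
  rw [heq]
  exact hC

/-- **Lemma 5.2**: for a nonempty hull `H` in `ℍ` w.r.t. `∞`, the extension of
`φ_H⁻¹` satisfies `φ_H⁻¹(x) > x` on `(−∞, c_H)` and `φ_H⁻¹(x) < x` on `(d_H, ∞)`;
equivalently `φ_H(x) < x` on `(−∞, a_H)` and `φ_H(x) > x` on `(b_H, ∞)`.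
Consequently `[a_H, b_H] ⊆ [c_H, d_H]`. -/

theorem hull_interval_inequalities (H : Set ℂ) (hH : IsHull H) (hne : H.Nonempty)
    (φ ψ : ℂ → ℂ) (hcap aH bH cH dH : ℝ)
    (hφ : IsHydroMapOn H φ hcap)
    (haH : IsGLB {x : ℝ | (x : ℂ) ∈ closure H} aH)
    (hbH : IsLUB {x : ℝ | (x : ℂ) ∈ closure H} bH)
    (hmin : IsMinExtInterval H φ cH dH)
    (hψ : ExtendsInvTo H φ ψ cH dH)
    (hψinv : ∀ x : ℝ, (x < aH ∨ bH < x) → ψ (φ (x : ℂ)) = (x : ℂ))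
    (hφmap : ∀ x : ℝ, x < aH → ∃ y : ℝ, y < cH ∧ φ (x : ℂ) = (y : ℂ))
    (hφmap' : ∀ x : ℝ, bH < x → ∃ y : ℝ, dH < y ∧ φ (x : ℂ) = (y : ℂ))
    (hφonto : ∀ y : ℝ, y < cH → ∃ x : ℝ, x < aH ∧ φ (x : ℂ) = (y : ℂ))
    (hφonto' : ∀ y : ℝ, dH < y → ∃ x : ℝ, bH < x ∧ φ (x : ℂ) = (y : ℂ)) :
    (∀ y : ℝ, y < cH → (ψ (y : ℂ)).im = 0 ∧ y < (ψ (y : ℂ)).re) ∧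
    (∀ y : ℝ, dH < y → (ψ (y : ℂ)).im = 0 ∧ (ψ (y : ℂ)).re < y) ∧
    (∀ x : ℝ, x < aH → (φ (x : ℂ)).re < x) ∧
    (∀ x : ℝ, bH < x → x < (φ (x : ℂ)).re) ∧
    Set.Icc aH bH ⊆ Set.Icc cH dH := by
  obtain ⟨hHsub, hHbdd, ⟨Cset, hCclosed, hHeq⟩, -⟩ := hH
  obtain ⟨hφbij, hφdiff, hφtend⟩ := hφ
  obtain ⟨hψdiff, hψmaps⟩ := hψ
  -- basic openness facts
  have hUHopen : IsOpen UpperHalf := isOpen_lt continuous_const Complex.continuous_im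
  have hdomopen : IsOpen (UpperHalf \ H) := by
    have hdomeq : UpperHalf \ H = UpperHalf ∩ Csetᶜ := by
      rw [hHeq]; ext z
      simp only [Set.mem_diff, Set.mem_inter_iff, Set.mem_compl_iff]
      tauto
    rw [hdomeq]; exact hUHopen.inter hCclosed.isOpen_compl
  have hsegcompact : IsCompact (realSeg cH dH) :=
    isCompact_Icc.image Complex.continuous_ofReal
  have hΩopen : IsOpen (realSeg cH dH)ᶜ := hsegcompact.isClosed.isOpen_compl
  have hUHsubΩ : ∀ z : ℂ, 0 < z.im → z ∈ (realSeg cH dH)ᶜ := by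
    intro z hz
    rw [hull_aux_mem_compl_realSeg]
    exact Or.inl (ne_of_gt hz)
  have hψdiffAt : ∀ w : ℂ, w ∈ (realSeg cH dH)ᶜ → DifferentiableAt ℂ ψ w := fun w hw =>
    hψdiff.differentiableAt (hΩopen.mem_nhds hw)
  have hψim : ∀ w : ℂ, 0 < w.im → 0 < (ψ w).im := fun w hw => (hψmaps w hw).1.1
  have hφψ : ∀ w : ℂ, 0 < w.im → φ (ψ w) = w := fun w hw => (hψmaps w hw).2
  have hψmem : ∀ w : ℂ, 0 < w.im → ψ w ∈ UpperHalf \ H := fun w hw => (hψmaps w hw).1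
  -- extraction of the normalization bound
  set C₀ : ℝ := |hcap| + 1 with hC₀def
  have hC₀pos : 0 < C₀ := by positivity
  obtain ⟨R₀, hR₀one, hbound⟩ : ∃ R₀ : ℝ, 1 ≤ R₀ ∧ ∀ z : ℂ, z ∈ UpperHalf \ H →
      R₀ ≤ norm z → norm (φ z - z) * norm z ≤ C₀ := by
    have hev : ∀ᶠ z in (comap (fun z : ℂ => norm z) atTop ⊓ 𝓟 (UpperHalf \ H)),
        dist ((φ z - z) * z) ((hcap : ℂ)) < 1 := Metric.tendsto_nhds.mp hφtend 1 one_pos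
    rw [Filter.eventually_inf_principal, Filter.eventually_comap] at hev
    obtain ⟨a₀, ha₀⟩ := Filter.eventually_atTop.mp hev
    refine ⟨max a₀ 1, le_max_right _ _, fun z hz hza => ?_⟩
    have h1 := ha₀ (norm z) (le_trans (le_max_left _ _) hza) z rfl hz
    rw [Complex.dist_eq] at h1
    have h3 := norm_add_le ((φ z - z) * z - (hcap : ℂ)) ((hcap : ℂ))
    rw [sub_add_cancel] at h3
    have h4 : norm ((hcap : ℂ)) = |hcap| := by rw [Complex.norm_real, Real.norm_eq_abs]
    rw [hC₀def, ← norm_mul]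
    rw [h4] at h3
    linarith
  -- choice of height T
  obtain ⟨TH, hTH⟩ := hHbdd.subset_closedBall 0
  set T : ℝ := max (max TH R₀) (2 * C₀) + 1 with hTdef
  have hTR₀ : R₀ ≤ T := by
    have h := (le_max_right TH R₀).trans (le_max_left (max TH R₀) (2*C₀)); linarith
  have hT1 : 1 ≤ T := le_trans hR₀one hTR₀
  have hTC₀ : 2 * C₀ ≤ T := by
    have h := le_max_right (max TH R₀) (2*C₀); linarith
  have hTTH : TH < T := by
    have h := (le_max_left TH R₀).trans (le_max_left (max TH R₀) (2*C₀)); linarith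
  have him_le_abs : ∀ z : ℂ, z.im ≤ norm z := fun z =>
    le_trans (le_abs_self _) (Complex.abs_im_le_norm z)
  have hmemT : ∀ z : ℂ, T < z.im → z ∈ UpperHalf \ H := by
    intro z hz
    refine ⟨show 0 < z.im by linarith, fun hzH => ?_⟩
    have h1 := hTH hzH
    rw [mem_closedBall_zero_iff] at h1
    have h2 := him_le_abs z
    linarith
  -- surjectivity of φ near i∞ (maximum modulus argument)
  have hsurj : ∀ w : ℂ, 2 * T + 2 ≤ w.im → T + 1 ≤ (ψ w).im := by
    intro w hwim
    have hwpos : 0 < w.im := by linarith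
    set ρ : ℝ := w.im - T - 1 with hρdef
    have hρ1 : 1 ≤ ρ := by simp only [hρdef]; linarith
    have hρpos : 0 < ρ := by linarith
    have hcbim : ∀ z ∈ closedBall w ρ, T + 1 ≤ z.im := by
      intro z hz
      rw [mem_closedBall, Complex.dist_eq] at hz
      have h2 : |(z - w).im| ≤ norm (z - w) := Complex.abs_im_le_norm _
      rw [Complex.sub_im] at h2
      have h3 := abs_le.mp (le_trans h2 hz)
      simp only [hρdef] at h3
      linarith [h3.1]
    have hcbUH : ∀ z ∈ closedBall w ρ, z ∈ UpperHalf \ H := fun z hz =>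
      hmemT z (by linarith [hcbim z hz])
    have hcbabs : ∀ z ∈ closedBall w ρ, T + 1 ≤ norm z := fun z hz =>
      le_trans (hcbim z hz) (him_le_abs z)
    have hφsmall : ∀ z ∈ closedBall w ρ, norm (φ z - z) ≤ 1/2 := by
      intro z hz
      have habs := hcbabs z hz
      have h1 := hbound z (hcbUH z hz) (by linarith)
      nlinarith [norm_nonneg (φ z - z)]
    have hexz : ∃ z ∈ closedBall w ρ, φ z = w := by
      by_contra hcon
      push_neg at hcon
      set g : ℂ → ℂ := fun z => (φ z - w)⁻¹ with hgdef
      have hgd : DifferentiableOn ℂ g (closedBall w ρ) := by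
        intro z hz
        have hfd : DifferentiableAt ℂ φ z :=
          hφdiff.differentiableAt (hdomopen.mem_nhds (hcbUH z hz))
        exact ((hfd.sub (differentiableAt_const _)).inv
          (sub_ne_zero.mpr (hcon z hz))).differentiableWithinAt
      have hdc : DiffContOnCl ℂ g (ball w ρ) := by
        apply DifferentiableOn.diffContOnCl
        rwa [closure_ball w hρpos.ne']
      have hfr : ∀ z ∈ frontier (ball w ρ), ‖g z‖ ≤ (ρ - 1/2)⁻¹ := by
        intro z hz
        rw [frontier_ball w hρpos.ne'] at hz
        have hzb : z ∈ closedBall w ρ := sphere_subset_closedBall hz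
        have h1 : norm (z - w) = ρ := by rwa [mem_sphere, Complex.dist_eq] at hz
        have h2 : ρ - 1/2 ≤ norm (φ z - w) := by
          have h3 := hφsmall z hzb
          have h4 := norm_add_le (z - φ z) (φ z - w)
          have h5 : z - φ z + (φ z - w) = z - w := by ring
          rw [h5, h1] at h4
          have h6 : norm (z - φ z) = norm (φ z - z) := by
            rw [← norm_neg]; ring_nf
          linarith
        show ‖(φ z - w)⁻¹‖ ≤ (ρ - 1/2)⁻¹
        rw [norm_inv]
        exact inv_anti₀ (by linarith) h2
      have hcenter := Complex.norm_le_of_forall_mem_frontier_norm_le isBounded_ball hdc hfr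
        (subset_closure (mem_ball_self hρpos))
      have hwUH : w ∈ UpperHalf \ H := hmemT w (by linarith)
      have habsw : 2 * T + 2 ≤ norm w := le_trans hwim (him_le_abs w)
      have hcw : norm (φ w - w) ≤ 1/4 := by
        have h1 := hbound w hwUH (by linarith)
        nlinarith [norm_nonneg (φ w - w)]
      have hne0 : φ w - w ≠ 0 := sub_ne_zero.mpr (hcon w (mem_closedBall_self hρpos.le))
      have habs0 : 0 < norm (φ w - w) := norm_pos_iff.mpr hne0
      have h4 : (4 : ℝ) ≤ ‖g w‖ := by
        show (4 : ℝ) ≤ ‖(φ w - w)⁻¹‖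
        rw [norm_inv]
        calc (4:ℝ) = ((1:ℝ)/4)⁻¹ := by norm_num
          _ ≤ (norm (φ w - w))⁻¹ := inv_anti₀ habs0 hcw
      have h5 : (ρ - 1/2)⁻¹ ≤ 2 := by
        calc (ρ - 1/2)⁻¹ ≤ ((1:ℝ)/2)⁻¹ := inv_anti₀ (by norm_num) (by linarith)
          _ = 2 := by norm_num
      linarith
    obtain ⟨z, hzcb, hzφ⟩ := hexz
    have hψwz : ψ w = z :=
      hφbij.injOn (hψmem w hwpos) (hcbUH z hzcb) (by rw [hφψ w hwpos, hzφ])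
    rw [hψwz]
    exact hcbim z hzcb
  -- the normalization bound along i·n, and the Julia lemma
  have himψ : ∀ w : ℂ, 0 < w.im → w.im ≤ (ψ w).im := by
    refine hull_aux_julia ψ (fun w hw => hψdiffAt w (hUHsubΩ w hw)) hψim C₀ ⌈2*T+2⌉₊ ?_
    intro n hn
    have hcast : 2*T+2 ≤ (n:ℝ) := le_trans (Nat.le_ceil _) (by exact_mod_cast hn)
    have him : ((n:ℂ) * Complex.I).im = (n:ℝ) := by
      rw [Complex.mul_I_im, Complex.natCast_re]
    have hwim : 2*T+2 ≤ ((n:ℂ)*Complex.I).im := by rw [him]; exact hcast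
    have hwpos : 0 < ((n:ℂ)*Complex.I).im := by rw [him]; linarith
    have hzim : T + 1 ≤ (ψ ((n:ℂ)*Complex.I)).im := hsurj _ hwim
    have hzabs : T + 1 ≤ norm (ψ ((n:ℂ)*Complex.I)) :=
      le_trans hzim (him_le_abs _)
    have h1 := hbound _ (hψmem _ hwpos) (by linarith)
    rw [hφψ _ hwpos] at h1
    have h2 : norm (ψ ((n:ℂ)*Complex.I) - (n:ℂ)*Complex.I)
        = norm ((n:ℂ)*Complex.I - ψ ((n:ℂ)*Complex.I)) := by
      rw [← norm_neg]; ring_nf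
    rw [h2]
    nlinarith [norm_nonneg ((n:ℂ)*Complex.I - ψ ((n:ℂ)*Complex.I))]
  -- ψ is real on the two rays
  have hrealL : ∀ y : ℝ, y < cH → ∃ x : ℝ, x < aH ∧ ψ (y:ℂ) = (x:ℂ) := by
    intro y hy
    obtain ⟨x, hx, hφx⟩ := hφonto y hy
    exact ⟨x, hx, by rw [← hφx, hψinv x (Or.inl hx)]⟩
  have hrealR : ∀ y : ℝ, dH < y → ∃ x : ℝ, bH < x ∧ ψ (y:ℂ) = (x:ℂ) := by
    intro y hy
    obtain ⟨x, hx, hφx⟩ := hφonto' y hy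
    exact ⟨x, hx, by rw [← hφx, hψinv x (Or.inr hx)]⟩
  have hrayL : ∀ y : ℝ, y < cH → ((y:ℂ)) ∈ (realSeg cH dH)ᶜ := by
    intro y hy; rw [hull_aux_mem_compl_realSeg]
    right; left; simpa using hy
  have hrayR : ∀ y : ℝ, dH < y → ((y:ℂ)) ∈ (realSeg cH dH)ᶜ := by
    intro y hy; rw [hull_aux_mem_compl_realSeg]
    right; right; simpa using hy
  -- the vertical approach path
  have hpath0 : ∀ y : ℝ, Tendsto (fun t : ℝ => (y:ℂ) + (t:ℂ) * Complex.I)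
      (𝓝[>] (0:ℝ)) (𝓝 ((y:ℂ))) := by
    intro y
    have hc : Continuous (fun t : ℝ => (y:ℂ) + (t:ℂ) * Complex.I) :=
      continuous_const.add (Complex.continuous_ofReal.mul continuous_const)
    have h1 := hc.continuousAt (x := 0)
    rw [ContinuousAt] at h1
    simp only [Complex.ofReal_zero, zero_mul, add_zero] at h1
    exact h1.mono_left nhdsWithin_le_nhds
  have hpathim : ∀ y t : ℝ, ((y:ℂ) + (t:ℂ) * Complex.I).im = t := by
    intro y t
    simp [Complex.add_im, Complex.mul_I_im]
  -- derivative of Re ψ on the rays is ≥ 1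
  have hderiv : ∀ y : ℝ, (y:ℂ) ∈ (realSeg cH dH)ᶜ → (ψ (y:ℂ)).im = 0 →
      ∃ dv : ℝ, HasDerivAt (fun t : ℝ => (ψ (t:ℂ)).re) dv y ∧ 1 ≤ dv := by
    intro y hyΩ hyim
    have hdA := (hψdiffAt _ hyΩ).hasDerivAt
    refine ⟨(deriv ψ (y:ℂ)).re, hdA.real_of_complex, ?_⟩
    have hslope : Tendsto (slope ψ ((y:ℂ))) (𝓝[≠] ((y:ℂ))) (𝓝 (deriv ψ (y:ℂ))) :=
      hasDerivAt_iff_tendsto_slope.mp hdA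
    have hpath : Tendsto (fun t : ℝ => (y:ℂ) + (t:ℂ) * Complex.I)
        (𝓝[>] (0:ℝ)) (𝓝[≠] ((y:ℂ))) := by
      rw [tendsto_nhdsWithin_iff]
      refine ⟨hpath0 y, ?_⟩
      filter_upwards [self_mem_nhdsWithin] with t ht
      simp only [Set.mem_compl_iff, Set.mem_singleton_iff]
      intro hmem
      have h1 : ((y:ℂ) + (t:ℂ) * Complex.I).im = ((y:ℂ)).im := by rw [hmem]
      rw [hpathim y t, Complex.ofReal_im] at h1
      exact absurd h1 (ne_of_gt ht)
    have hcomp := hslope.comp hpath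
    have hre := (Complex.continuous_re.tendsto _).comp hcomp
    refine ge_of_tendsto hre ?_
    filter_upwards [self_mem_nhdsWithin] with t ht
    have htpos : (0:ℝ) < t := ht
    have hwim : 0 < ((y:ℂ) + (t:ℂ) * Complex.I).im := by rw [hpathim]; exact htpos
    have h1 : t ≤ (ψ ((y:ℂ) + (t:ℂ) * Complex.I)).im := by
      have h2 := himψ _ hwim
      rwa [hpathim] at h2
    show (1:ℝ) ≤ (slope ψ ((y:ℂ)) ((y:ℂ) + (t:ℂ) * Complex.I)).re
    rw [slope_def_field]
    have hsub : ((y:ℂ) + (t:ℂ) * Complex.I) - (y:ℂ) = (t:ℂ) * Complex.I := by ring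
    rw [hsub, Complex.div_re]
    have hd1 : ((t:ℂ) * Complex.I).re = 0 := by simp
    have hd2 : ((t:ℂ) * Complex.I).im = t := by simp
    have hd3 : Complex.normSq ((t:ℂ) * Complex.I) = t^2 := by
      simp [Complex.normSq_apply]; ring
    rw [hd1, hd2, hd3]
    have hnum : (ψ ((y:ℂ) + (t:ℂ) * Complex.I) - ψ ((y:ℂ))).im
        = (ψ ((y:ℂ) + (t:ℂ) * Complex.I)).im := by
      rw [Complex.sub_im, hyim, sub_zero]
    rw [hnum]
    have heq : (ψ ((y:ℂ) + (t:ℂ) * Complex.I) - ψ ((y:ℂ))).re * 0 / t^2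
        + (ψ ((y:ℂ) + (t:ℂ) * Complex.I)).im * t / t^2
        = (ψ ((y:ℂ) + (t:ℂ) * Complex.I)).im / t := by
      have ht0 : t ≠ 0 := ne_of_gt htpos
      field_simp
      ring
    rw [heq, le_div_iff₀ htpos]
    linarith
  -- monotonicity of Re ψ − id on each ray
  have hmonoL : MonotoneOn (fun y : ℝ => (ψ (y:ℂ)).re - y) (Set.Iio cH) := by
    have key : ∀ y ∈ Set.Iio cH, ∃ dv : ℝ,
        HasDerivAt (fun t : ℝ => (ψ (t:ℂ)).re - t) dv y ∧ 0 ≤ dv := by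
      intro y hy
      obtain ⟨x, hx, hψx⟩ := hrealL y hy
      have hyim : (ψ (y:ℂ)).im = 0 := by rw [hψx]; simp
      obtain ⟨dv, hdv, hdv1⟩ := hderiv y (hrayL y hy) hyim
      exact ⟨dv - 1, hdv.sub (hasDerivAt_id y), by linarith⟩
    apply monotoneOn_of_deriv_nonneg (convex_Iio cH)
    · intro y hy
      obtain ⟨dv, hdv, -⟩ := key y hy
      exact hdv.differentiableAt.continuousAt.continuousWithinAt
    · intro y hy
      rw [interior_Iio] at hy
      obtain ⟨dv, hdv, -⟩ := key y hy
      exact hdv.differentiableAt.differentiableWithinAt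
    · intro y hy
      rw [interior_Iio] at hy
      obtain ⟨dv, hdv, h0⟩ := key y hy
      rw [hdv.deriv]; exact h0
  have hmonoR : MonotoneOn (fun y : ℝ => (ψ (y:ℂ)).re - y) (Set.Ioi dH) := by
    have key : ∀ y ∈ Set.Ioi dH, ∃ dv : ℝ,
        HasDerivAt (fun t : ℝ => (ψ (t:ℂ)).re - t) dv y ∧ 0 ≤ dv := by
      intro y hy
      obtain ⟨x, hx, hψx⟩ := hrealR y hy
      have hyim : (ψ (y:ℂ)).im = 0 := by rw [hψx]; simp
      obtain ⟨dv, hdv, hdv1⟩ := hderiv y (hrayR y hy) hyim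
      exact ⟨dv - 1, hdv.sub (hasDerivAt_id y), by linarith⟩
    apply monotoneOn_of_deriv_nonneg (convex_Ioi dH)
    · intro y hy
      obtain ⟨dv, hdv, -⟩ := key y hy
      exact hdv.differentiableAt.continuousAt.continuousWithinAt
    · intro y hy
      rw [interior_Ioi] at hy
      obtain ⟨dv, hdv, -⟩ := key y hy
      exact hdv.differentiableAt.differentiableWithinAt
    · intro y hy
      rw [interior_Ioi] at hy
      obtain ⟨dv, hdv, h0⟩ := key y hy
      rw [hdv.deriv]; exact h0
  -- pointwise bound from the normalization (ε-trick)
  have hpt : ∀ y : ℝ, (y:ℂ) ∈ (realSeg cH dH)ᶜ → R₀ < norm (ψ (y:ℂ)) →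
      norm ((y:ℂ) - ψ (y:ℂ)) * norm (ψ (y:ℂ)) ≤ C₀ := by
    intro y hyΩ hyabs
    have hcont : ContinuousAt ψ ((y:ℂ)) := (hψdiffAt _ hyΩ).continuousAt
    have hz : Tendsto (fun t : ℝ => ψ ((y:ℂ) + (t:ℂ) * Complex.I)) (𝓝[>] (0:ℝ))
        (𝓝 (ψ ((y:ℂ)))) := hcont.tendsto.comp (hpath0 y)
    have habs : Tendsto (fun t : ℝ => norm (ψ ((y:ℂ) + (t:ℂ) * Complex.I)))
        (𝓝[>] (0:ℝ)) (𝓝 (norm (ψ ((y:ℂ))))) :=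
      (continuous_norm.tendsto _).comp hz
    have hev : ∀ᶠ t : ℝ in 𝓝[>] (0:ℝ),
        norm ((y:ℂ) + (t:ℂ) * Complex.I - ψ ((y:ℂ) + (t:ℂ) * Complex.I))
          * norm (ψ ((y:ℂ) + (t:ℂ) * Complex.I)) ≤ C₀ := by
      have hevR : ∀ᶠ t : ℝ in 𝓝[>] (0:ℝ),
          R₀ ≤ norm (ψ ((y:ℂ) + (t:ℂ) * Complex.I)) :=
        habs.eventually_const_le hyabs
      filter_upwards [hevR, self_mem_nhdsWithin] with t htR ht
      have htpos : (0:ℝ) < t := ht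
      have hwim : 0 < ((y:ℂ) + (t:ℂ) * Complex.I).im := by rw [hpathim]; exact htpos
      have h1 := hbound _ (hψmem _ hwim) htR
      rw [hφψ _ hwim] at h1
      exact h1
    have hlim : Tendsto (fun t : ℝ =>
        norm ((y:ℂ) + (t:ℂ) * Complex.I - ψ ((y:ℂ) + (t:ℂ) * Complex.I))
          * norm (ψ ((y:ℂ) + (t:ℂ) * Complex.I))) (𝓝[>] (0:ℝ))
        (𝓝 (norm ((y:ℂ) - ψ ((y:ℂ))) * norm (ψ ((y:ℂ))))) := by
      refine Tendsto.mul ?_ habs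
      exact (continuous_norm.tendsto _).comp ((hpath0 y).sub hz)
    exact le_of_tendsto hlim hev
  -- identity-theorem contradiction helper
  have hidcontra : ∀ z₀ : ℂ, (∃ᶠ z in 𝓝[≠] z₀, ψ z = z) → z₀ ∈ (realSeg cH dH)ᶜ → False := by
    intro z₀ hfreq hz₀
    have hψan : AnalyticOnNhd ℂ ψ (realSeg cH dH)ᶜ := hψdiff.analyticOnNhd hΩopen
    have hidan : AnalyticOnNhd ℂ (fun z : ℂ => z) (realSeg cH dH)ᶜ :=
      (differentiable_id.differentiableOn).analyticOnNhd hΩopen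
    have heqon := hψan.eqOn_of_preconnected_of_frequently_eq hidan
      (hull_aux_preconnected cH dH) hz₀ hfreq
    obtain ⟨z₅, hz₅⟩ := hne
    have hz₅im : 0 < z₅.im := hHsub hz₅
    have h2 := (hψmem z₅ hz₅im).2
    rw [heqon (hUHsubΩ z₅ hz₅im)] at h2
    exact h2 hz₅
  have hfreq_seq : ∀ y₀ : ℝ, (∀ n : ℕ, ψ ((y₀ - 1/(n+1) : ℝ):ℂ) = ((y₀ - 1/(n+1) : ℝ):ℂ)) →
      (∃ᶠ z in 𝓝[≠] ((y₀:ℝ):ℂ), ψ z = z) := by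
    intro y₀ hvals
    have h1 : Tendsto (fun n : ℕ => ((y₀ - 1/(n+1) : ℝ):ℂ)) atTop (𝓝[≠] ((y₀:ℝ):ℂ)) := by
      rw [tendsto_nhdsWithin_iff]
      constructor
      · refine (Complex.continuous_ofReal.tendsto _).comp ?_
        have h2 := tendsto_one_div_add_atTop_nhds_zero_nat (𝕜 := ℝ)
        simpa using (tendsto_const_nhds (x := y₀)).sub h2
      · filter_upwards with n
        simp only [Set.mem_compl_iff, Set.mem_singleton_iff]
        intro h
        have h2 : y₀ - 1/((n:ℝ)+1) = y₀ := Complex.ofReal_injective h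
        have hpos : 0 < 1/((n:ℝ)+1) := by positivity
        linarith
    exact h1.frequently (Frequently.of_forall hvals)
  -- nonnegativity on the left ray
  have hposL : ∀ y : ℝ, y < cH → 0 ≤ (ψ (y:ℂ)).re - y := by
    intro y₀ hy₀
    by_contra hcon
    push_neg at hcon
    set m : ℝ := y₀ - (ψ ((y₀:ℝ):ℂ)).re with hmdef
    have hm : 0 < m := by simp only [hmdef]; linarith
    set y₁ : ℝ := min y₀ (min (-(R₀+1)) (-(2*C₀/m))) - 1 with hy₁def
    have hy₁a : y₁ ≤ y₀ - 1 := by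
      have h := min_le_left y₀ (min (-(R₀+1)) (-(2*C₀/m))); simp only [hy₁def]; linarith
    have hy₁b : y₁ ≤ -(R₀+1) - 1 := by
      have h1 := min_le_right y₀ (min (-(R₀+1)) (-(2*C₀/m)))
      have h2 := min_le_left (-(R₀+1)) (-(2*C₀/m))
      simp only [hy₁def]; linarith
    have hy₁c : y₁ ≤ -(2*C₀/m) - 1 := by
      have h1 := min_le_right y₀ (min (-(R₀+1)) (-(2*C₀/m)))
      have h2 := min_le_right (-(R₀+1)) (-(2*C₀/m))
      simp only [hy₁def]; linarith
    have hy₁cH : y₁ < cH := by linarith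
    obtain ⟨x₁, hx₁aH, hψ₁⟩ := hrealL y₁ hy₁cH
    have hx₁re : (ψ ((y₁:ℝ):ℂ)).re = x₁ := by rw [hψ₁]; simp
    have hmono := hmonoL (show y₁ ∈ Set.Iio cH from hy₁cH)
      (show y₀ ∈ Set.Iio cH from hy₀) (by linarith)
    simp only at hmono
    rw [hx₁re] at hmono
    have h1 : x₁ - y₁ ≤ -m := by simp only [hmdef] at *; linarith
    clear_value m y₁
    have hx₁neg : x₁ < -R₀ := by linarith
    have hgt : R₀ < norm (ψ ((y₁:ℝ):ℂ)) := by
      rw [hψ₁, Complex.norm_real, Real.norm_eq_abs, abs_of_neg (by linarith : x₁ < 0)]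
      linarith
    have hb := hpt y₁ (hrayL y₁ hy₁cH) hgt
    rw [hψ₁] at hb
    have he1 : norm ((y₁:ℂ) - (x₁:ℂ)) = |y₁ - x₁| := by
      rw [← Complex.ofReal_sub, Complex.norm_real, Real.norm_eq_abs]
    have he2 : norm ((x₁:ℝ):ℂ) = -x₁ := by
      rw [Complex.norm_real, Real.norm_eq_abs, abs_of_neg (by linarith : x₁ < 0)]
    rw [he1, he2] at hb
    have h2 : m ≤ |y₁ - x₁| := by
      rw [_root_.abs_of_nonneg (by linarith : (0:ℝ) ≤ y₁ - x₁)]; linarith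
    have h3 : 2*C₀/m ≤ -x₁ := by linarith
    have h4 : m * (2*C₀/m) ≤ |y₁ - x₁| * (-x₁) :=
      mul_le_mul h2 h3 (by positivity) (abs_nonneg _)
    have h5 : m * (2*C₀/m) = 2*C₀ := by field_simp
    linarith
  -- nonpositivity on the right ray
  have hnegR : ∀ y : ℝ, dH < y → (ψ (y:ℂ)).re - y ≤ 0 := by
    intro y₀ hy₀
    by_contra hcon
    push_neg at hcon
    set m : ℝ := (ψ ((y₀:ℝ):ℂ)).re - y₀ with hmdef
    have hm : 0 < m := by simp only [hmdef]; linarith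
    set y₁ : ℝ := max y₀ (max (R₀+1) (2*C₀/m)) + 1 with hy₁def
    have hy₁a : y₀ + 1 ≤ y₁ := by
      have h := le_max_left y₀ (max (R₀+1) (2*C₀/m)); simp only [hy₁def]; linarith
    have hy₁b : R₀ + 2 ≤ y₁ + 1 := by
      have h1 := le_max_right y₀ (max (R₀+1) (2*C₀/m))
      have h2 := le_max_left (R₀+1) (2*C₀/m)
      simp only [hy₁def]; linarith
    have hy₁c : 2*C₀/m + 1 ≤ y₁ := by
      have h1 := le_max_right y₀ (max (R₀+1) (2*C₀/m))
      have h2 := le_max_right (R₀+1) (2*C₀/m)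
      simp only [hy₁def]; linarith
    have hy₁dH : dH < y₁ := by linarith
    obtain ⟨x₁, hx₁bH, hψ₁⟩ := hrealR y₁ hy₁dH
    have hx₁re : (ψ ((y₁:ℝ):ℂ)).re = x₁ := by rw [hψ₁]; simp
    have hmono := hmonoR (show y₀ ∈ Set.Ioi dH from hy₀)
      (show y₁ ∈ Set.Ioi dH from hy₁dH) (by linarith)
    simp only at hmono
    rw [hx₁re] at hmono
    have h1 : m ≤ x₁ - y₁ := by simp only [hmdef] at *; linarith
    clear_value m y₁
    have hx₁pos : R₀ < x₁ := by linarith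
    have hgt : R₀ < norm (ψ ((y₁:ℝ):ℂ)) := by
      rw [hψ₁, Complex.norm_real, Real.norm_eq_abs, abs_of_pos (by linarith : (0:ℝ) < x₁)]
      linarith
    have hb := hpt y₁ (hrayR y₁ hy₁dH) hgt
    rw [hψ₁] at hb
    have he1 : norm ((y₁:ℂ) - (x₁:ℂ)) = |y₁ - x₁| := by
      rw [← Complex.ofReal_sub, Complex.norm_real, Real.norm_eq_abs]
    have he2 : norm ((x₁:ℝ):ℂ) = x₁ := by
      rw [Complex.norm_real, Real.norm_eq_abs, abs_of_pos (by linarith : (0:ℝ) < x₁)]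
    rw [he1, he2] at hb
    have h2 : m ≤ |y₁ - x₁| := by
      rw [_root_.abs_of_nonpos (by linarith : y₁ - x₁ ≤ 0)]; linarith
    have h3 : 2*C₀/m ≤ x₁ := by linarith
    have h4 : m * (2*C₀/m) ≤ |y₁ - x₁| * x₁ :=
      mul_le_mul h2 h3 (by positivity) (abs_nonneg _)
    have h5 : m * (2*C₀/m) = 2*C₀ := by field_simp
    linarith
  -- strict inequalities
  have hstrictL : ∀ y : ℝ, y < cH → 0 < (ψ (y:ℂ)).re - y := by
    intro y₀ hy₀
    rcases lt_or_eq_of_le (hposL y₀ hy₀) with h | h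
    · exact h
    exfalso
    have hzero : ∀ y : ℝ, y ≤ y₀ → ψ ((y:ℝ):ℂ) = ((y:ℝ):ℂ) := by
      intro y hy
      have hycH : y < cH := by linarith
      have h1 := hposL y hycH
      have h2 := hmonoL (show y ∈ Set.Iio cH from hycH)
        (show y₀ ∈ Set.Iio cH from hy₀) hy
      simp only at h2
      have h3 : (ψ ((y:ℝ):ℂ)).re = y := by linarith
      obtain ⟨x, hx, hψx⟩ := hrealL y hycH
      have h4 : x = y := by rw [hψx] at h3; simpa using h3
      rw [hψx, h4]
    apply hidcontra ((y₀ - 1 : ℝ):ℂ) ?_ (hrayL (y₀ - 1) (by linarith))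
    apply hfreq_seq (y₀ - 1)
    intro n
    apply hzero
    have hp : 0 < 1/((n:ℝ)+1) := by positivity
    linarith
  have hstrictR : ∀ y : ℝ, dH < y → (ψ (y:ℂ)).re - y < 0 := by
    intro y₀ hy₀
    rcases lt_or_eq_of_le (hnegR y₀ hy₀) with h | h
    · exact h
    exfalso
    have hzero : ∀ y : ℝ, y₀ ≤ y → ψ ((y:ℝ):ℂ) = ((y:ℝ):ℂ) := by
      intro y hy
      have hydH : dH < y := by linarith
      have h1 := hnegR y hydH
      have h2 := hmonoR (show y₀ ∈ Set.Ioi dH from hy₀)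
        (show y ∈ Set.Ioi dH from hydH) hy
      simp only at h2
      have h3 : (ψ ((y:ℝ):ℂ)).re = y := by linarith
      obtain ⟨x, hx, hψx⟩ := hrealR y hydH
      have h4 : x = y := by rw [hψx] at h3; simpa using h3
      rw [hψx, h4]
    apply hidcontra ((y₀ + 1 : ℝ):ℂ) ?_ (hrayR (y₀ + 1) (by linarith))
    apply hfreq_seq (y₀ + 1)
    intro n
    apply hzero
    have hp : 1/((n:ℝ)+1) ≤ 1 := by
      rw [div_le_one (by positivity)]
      linarith [Nat.cast_nonneg (α := ℝ) n]
    linarith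
  -- assembling the five statements
  have item1 : ∀ y : ℝ, y < cH → (ψ (y:ℂ)).im = 0 ∧ y < (ψ (y:ℂ)).re := by
    intro y hy
    obtain ⟨x, hx, hψx⟩ := hrealL y hy
    exact ⟨by rw [hψx]; simp, by linarith [hstrictL y hy]⟩
  have item2 : ∀ y : ℝ, dH < y → (ψ (y:ℂ)).im = 0 ∧ (ψ (y:ℂ)).re < y := by
    intro y hy
    obtain ⟨x, hx, hψx⟩ := hrealR y hy
    exact ⟨by rw [hψx]; simp, by linarith [hstrictR y hy]⟩
  have item3 : ∀ x : ℝ, x < aH → (φ (x:ℂ)).re < x := by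
    intro x hx
    obtain ⟨y, hy, hφx⟩ := hφmap x hx
    have h1 := hψinv x (Or.inl hx)
    rw [hφx] at h1
    have h2 := (item1 y hy).2
    rw [h1] at h2
    simp only [Complex.ofReal_re] at h2
    rw [hφx]
    simpa using h2
  have item4 : ∀ x : ℝ, bH < x → x < (φ (x:ℂ)).re := by
    intro x hx
    obtain ⟨y, hy, hφx⟩ := hφmap' x hx
    have h1 := hψinv x (Or.inr hx)
    rw [hφx] at h1
    have h2 := (item2 y hy).2
    rw [h1] at h2
    simp only [Complex.ofReal_re] at h2
    rw [hφx]
    simpa using h2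
  refine ⟨item1, item2, item3, item4, ?_⟩
  have hcAH : cH ≤ aH := by
    by_contra hcon
    push_neg at hcon
    set y : ℝ := (aH + cH)/2 with hydef
    have hy1 : y < cH := by simp only [hydef]; linarith
    have hy2 : aH < y := by simp only [hydef]; linarith
    obtain ⟨x, hx, hψx⟩ := hrealL y hy1
    have h2 := (item1 y hy1).2
    rw [hψx] at h2
    simp only [Complex.ofReal_re] at h2
    linarith
  have hbDH : bH ≤ dH := by
    by_contra hcon
    push_neg at hcon
    set y : ℝ := (bH + dH)/2 with hydef
    have hy1 : dH < y := by simp only [hydef]; linarith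
    have hy2 : y < bH := by simp only [hydef]; linarith
    obtain ⟨x, hx, hψx⟩ := hrealR y hy1
    have h2 := (item2 y hy1).2
    rw [hψx] at h2
    simp only [Complex.ofReal_re] at h2
    linarith
  exact Set.Icc_subset_Icc hcAH hbDH




end
end
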